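/- arXiv:1807.04491 — 4 statements merged into one kernel-verified Lean document; each statement's English description precedes it below -/
import Mathlib

section
/- For β ∈ (1,2), if two sequences (s_k), (t_k) ∈ X_β satisfy ∑_{k=1}^∞ s_{-k} β^{-k} = ∑_{k=1}^∞ t_{-k} β^{-k}, then s_{-k} = t_{-k} for all k ≥ 1 (uniqueness of β-expansions within the β-shift). -/
set_option linter.unnecessarySeqFocus false

/-- Uniqueness of β-expansions within the β-shift: for `β ∈ (1,2)`, if two sequences
in `X_β` have the same value `∑_{k≥1} s_{-k} β^{-k}`, then `s_{-k} = t_{-k}` for all `k ≥ 1`. -/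
theorem stmt3 (β : ℝ) (hβ : 1 < β) (hβ2 : β < 2)
    (s t : ℤ → ℝ)
    (hs01 : ∀ k, s k = 0 ∨ s k = 1) (ht01 : ∀ k, t k = 0 ∨ t k = 1)
    (hsX : ∀ i : ℤ, ∑' k : ℕ, s (i - (k + 1)) * (β⁻¹) ^ (k + 1) < 1)
    (htX : ∀ i : ℤ, ∑' k : ℕ, t (i - (k + 1)) * (β⁻¹) ^ (k + 1) < 1)
    (heq : ∑' k : ℕ, s (-(k + 1 : ℕ)) * (β⁻¹) ^ (k + 1)
         = ∑' k : ℕ, t (-(k + 1 : ℕ)) * (β⁻¹) ^ (k + 1)) :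
    ∀ k : ℕ, s (-(k + 1 : ℕ)) = t (-(k + 1 : ℕ)) := by
  have hβ0 : (0:ℝ) < β := by linarith
  set x : ℝ := β⁻¹ with hxdef
  have hx0 : 0 < x := inv_pos.mpr hβ0
  have hx1 : x < 1 := by
    rw [hxdef, inv_lt_one_iff₀]; right; exact hβ
  have hgeo : Summable (fun k : ℕ => x ^ (k + 1)) := by
    have := (summable_geometric_of_lt_one hx0.le hx1).mul_left x
    simpa [pow_succ, mul_comm] using this
  have hsum : ∀ (u : ℤ → ℝ), (∀ k, u k = 0 ∨ u k = 1) →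
      Summable (fun k : ℕ => u (-(k + 1 : ℕ)) * x ^ (k + 1)) := by
    intro u hu
    apply Summable.of_nonneg_of_le (fun k => ?_) (fun k => ?_) hgeo
    · rcases hu (-(k + 1 : ℕ) : ℤ) with h | h <;> rw [h] <;> positivity
    · rcases hu (-(k + 1 : ℕ) : ℤ) with h | h <;> rw [h] <;> simp <;> positivity
  -- tail bound and nonnegativity
  have key : ∀ (u : ℤ → ℝ), (∀ k, u k = 0 ∨ u k = 1) →
      (∀ i : ℤ, ∑' k : ℕ, u (i - (k + 1)) * x ^ (k + 1) < 1) →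
      ∀ n : ℕ, 0 ≤ (∑' k : ℕ, u (-((k + (n+1)) + 1 : ℕ)) * x ^ ((k + (n+1)) + 1)) ∧
        (∑' k : ℕ, u (-((k + (n+1)) + 1 : ℕ)) * x ^ ((k + (n+1)) + 1)) < x ^ (n+1) := by
    intro u hu huX n
    have h1 : ∀ k : ℕ, u (-((k + (n+1)) + 1 : ℕ)) * x ^ ((k + (n+1)) + 1)
        = (u ((-(n+1:ℕ) : ℤ) - (k + 1)) * x ^ (k + 1)) * x ^ (n+1) := by
      intro k
      have harg : (-((k + (n+1)) + 1 : ℕ) : ℤ) = (-(n+1:ℕ) : ℤ) - ((k : ℤ) + 1) := by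
        push_cast; ring
      rw [harg]; ring
    constructor
    · apply tsum_nonneg
      intro k
      rcases hu (-((k + (n+1)) + 1 : ℕ) : ℤ) with h | h <;> rw [h] <;> positivity
    · calc (∑' k : ℕ, u (-((k + (n+1)) + 1 : ℕ)) * x ^ ((k + (n+1)) + 1))
          = (∑' k : ℕ, u ((-(n+1:ℕ) : ℤ) - (k + 1)) * x ^ (k + 1)) * x ^ (n+1) := by
            rw [← tsum_mul_right]; exact tsum_congr h1
      _ < 1 * x ^ (n+1) := mul_lt_mul_of_pos_right (huX _) (by positivity)
      _ = x ^ (n+1) := one_mul _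
  set Fs : ℕ → ℝ := fun k => s (-(k + 1 : ℕ)) * x ^ (k + 1) with hFs
  set Ft : ℕ → ℝ := fun k => t (-(k + 1 : ℕ)) * x ^ (k + 1) with hFt
  have hSs : Summable Fs := hsum s hs01
  have hSt : Summable Ft := hsum t ht01
  intro n
  induction n using Nat.strong_induction_on with
  | _ n IH =>
    -- equality of tails from index n
    have hrange : ∑ i ∈ Finset.range n, Fs i = ∑ i ∈ Finset.range n, Ft i := by
      apply Finset.sum_congr rfl
      intro i hi
      have := IH i (Finset.mem_range.mp hi)
      simp only [hFs, hFt, this]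
    have hs_split := Summable.sum_add_tsum_nat_add (f := Fs) n hSs
    have ht_split := Summable.sum_add_tsum_nat_add (f := Ft) n hSt
    have htails : (∑' k : ℕ, Fs (k + n)) = ∑' k : ℕ, Ft (k + n) := by
      have : (∑' k : ℕ, Fs k) = ∑' k : ℕ, Ft k := heq
      linarith [hs_split, ht_split, hrange, this]
    -- split off the first term of each tail
    have hshift : ∀ (F : ℕ → ℝ), Summable F →
        (∑' k : ℕ, F (k + n)) = F n + ∑' k : ℕ, F ((k + (n+1))) := by
      intro F hF
      have hF' : Summable (fun k => F (k + n)) := (summable_nat_add_iff n).mpr hF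
      rw [Summable.tsum_eq_zero_add hF']
      congr 1
      · simp
      · exact tsum_congr fun k => by rw [show k + 1 + n = k + (n+1) by omega]
    rw [hshift Fs hSs, hshift Ft hSt] at htails
    have hks := key s hs01 (by simpa [hxdef] using hsX) n
    have hkt := key t ht01 (by simpa [hxdef] using htX) n
    have hFsn : Fs n = s (-(n + 1 : ℕ)) * x ^ (n+1) := rfl
    have hFtn : Ft n = t (-(n + 1 : ℕ)) * x ^ (n+1) := rfl
    have hBs0 := hks.1
    have hBs1 := hks.2
    have hBt0 := hkt.1
    have hBt1 := hkt.2
    have hxn : (0:ℝ) < x ^ (n+1) := by positivity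
    rcases hs01 (-(n + 1 : ℕ) : ℤ) with hsv | hsv <;>
      rcases ht01 (-(n + 1 : ℕ) : ℤ) with htv | htv
    · rw [hsv, htv]
    · exfalso
      rw [hFsn, hFtn, hsv, htv] at htails
      simp only [zero_mul, one_mul, zero_add] at htails
      simp only [hFs, hFt] at htails hBs0 hBs1 hBt0 hBt1
      linarith
    · exfalso
      rw [hFsn, hFtn, hsv, htv] at htails
      simp only [zero_mul, one_mul, zero_add] at htails
      simp only [hFs, hFt] at htails hBs0 hBs1 hBt0 hBt1
      linarith
    · rw [hsv, htv]
end

section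
/- The coding map π conjugates the skew map f with the shift σ on X̄_β^⋆: for every sequence (s_k) ∈ X̄_β^⋆, f(π((s_k))) = π(σ((s_k))), where σ((s_k)) = (s_{k-1}). -/
/-- value in `{0,1} ⊆ ℝ` of a boolean. -/
noncomputable def bval (b : Bool) : ℝ := if b then 1 else 0

/-- The closed two-sided β-shift inside `{0,1}^ℤ`. -/
def XbarBeta (β : ℝ) : Set (ℤ → Bool) :=
  {s | ∀ i : ℤ, ∑' k : ℕ, bval (s (i - (k + 1))) * (β⁻¹) ^ (k + 1) ≤ 1}

/-- `X̄_β^⋆`: the closed β-shift minus sequences having a left tail of zeros. -/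
def XbarBetaStar (β : ℝ) : Set (ℤ → Bool) :=
  XbarBeta β \ {s | ∃ i : ℤ, ∀ j : ℤ, j ≤ i → s j = false}

/-- The coding map `π(s) = (∑_{k≥1} s_{-k} β^{-k}, ∑_{k≥0} s_k (1-τ) τ^k)`. -/
noncomputable def codingMap (β τ : ℝ) (s : ℤ → Bool) : ℝ × ℝ :=
  (∑' k : ℕ, bval (s (-(k + 1 : ℕ))) * (β⁻¹) ^ (k + 1),
   ∑' k : ℕ, bval (s (k : ℤ)) * ((1 - τ) * τ ^ k))

/-- The skew map `f` on `[0,1]²`. -/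
noncomputable def skewMap (β τ : ℝ) (p : ℝ × ℝ) : ℝ × ℝ :=
  if p.1 ≤ β⁻¹ then (β * p.1, τ * p.2) else (β * p.1 - 1, τ * p.2 + (1 - τ))

/-- The two-sided shift `σ((s_k)) = (s_{k-1})`. -/
def shiftσ (s : ℤ → Bool) : ℤ → Bool := fun k => s (k - 1)

lemma bval_nonneg (b : Bool) : 0 ≤ bval b := by unfold bval; split <;> norm_num

lemma bval_le_one (b : Bool) : bval b ≤ 1 := by unfold bval; split <;> norm_num

lemma summable_mul_bval (c : ℕ → Bool) (u : ℕ → ℝ) (hu : Summable u)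
    (hu0 : ∀ k, 0 ≤ u k) : Summable fun k => bval (c k) * u k := by
  refine Summable.of_nonneg_of_le (fun k => mul_nonneg (bval_nonneg _) (hu0 k))
    (fun k => mul_le_of_le_one_left (hu0 k) (bval_le_one _)) hu

/-- The coding map conjugates `f` with the shift on `X̄_β^⋆`:
`f(π(s)) = π(σ(s))` for all `s ∈ X̄_β^⋆`. -/
theorem stmt5 (β τ : ℝ) (hβ : 1 < β) (hβ2 : β < 2) (hτ0 : 0 < τ) (hτ : τ < 1 / 2)
    (s : ℤ → Bool) (hs : s ∈ XbarBetaStar β) :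
    skewMap β τ (codingMap β τ s) = codingMap β τ (shiftσ s) := by
  have hβ0 : (0:ℝ) < β := by linarith
  have hr0 : (0:ℝ) ≤ β⁻¹ := by positivity
  have hr1 : β⁻¹ < 1 := by
    rw [inv_lt_one_iff₀]; right; exact hβ
  have hτ1 : τ < 1 := by linarith
  -- summability of the geometric majorants
  have hu1 : Summable (fun k : ℕ => (β⁻¹) ^ (k + 1)) := by
    simpa [pow_succ'] using (summable_geometric_of_lt_one hr0 hr1).mul_left β⁻¹
  have hu1' : ∀ k : ℕ, (0:ℝ) ≤ (β⁻¹) ^ (k + 1) := fun k => pow_nonneg hr0 _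
  have hu2 : Summable (fun k : ℕ => (1 - τ) * τ ^ k) :=
    (summable_geometric_of_lt_one hτ0.le hτ1).mul_left _
  have hu2' : ∀ k : ℕ, (0:ℝ) ≤ (1 - τ) * τ ^ k :=
    fun k => mul_nonneg (by linarith) (pow_nonneg hτ0.le _)
  -- the three series
  set x : ℝ := ∑' k : ℕ, bval (s (-(k + 1 : ℕ))) * (β⁻¹) ^ (k + 1) with hx_def
  set T : ℝ := ∑' k : ℕ, bval (s (-(k + 1 : ℕ) - 1)) * (β⁻¹) ^ (k + 1) with hT_def
  set Y : ℝ := ∑' k : ℕ, bval (s (k : ℤ)) * ((1 - τ) * τ ^ k) with hY_def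
  have hsumx : Summable (fun k : ℕ => bval (s (-(k + 1 : ℕ))) * (β⁻¹) ^ (k + 1)) :=
    summable_mul_bval _ _ hu1 hu1'
  have hsumT : Summable (fun k : ℕ => bval (s (-(k + 1 : ℕ) - 1)) * (β⁻¹) ^ (k + 1)) :=
    summable_mul_bval _ _ hu1 hu1'
  have hsumσ : Summable (fun k : ℕ => bval (s ((k : ℤ) - 1)) * ((1 - τ) * τ ^ k)) :=
    summable_mul_bval _ _ hu2 hu2'
  -- recursion for the first coordinate: x = bval(s(-1)) β⁻¹ + β⁻¹ T
  have hx : x = bval (s (-1)) * β⁻¹ + β⁻¹ * T := by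
    rw [hx_def, hsumx.tsum_eq_zero_add]
    congr 1
    · norm_num
    · rw [hT_def, ← tsum_mul_left]
      refine tsum_congr fun k => ?_
      have h1 : (-((k : ℕ) + 1 + 1 : ℕ) : ℤ) = -(k + 1 : ℕ) - 1 := by push_cast; ring
      rw [h1]; ring
  -- recursion for the second coordinate of the shifted point
  have hy : (∑' k : ℕ, bval (s ((k : ℤ) - 1)) * ((1 - τ) * τ ^ k))
      = bval (s (-1)) * (1 - τ) + τ * Y := by
    rw [hsumσ.tsum_eq_zero_add]
    congr 1
    · norm_num
    · rw [hY_def, ← tsum_mul_left]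
      refine tsum_congr fun k => ?_
      have h1 : (((k : ℕ) + 1 : ℕ) : ℤ) - 1 = (k : ℤ) := by push_cast; ring
      rw [h1]; ring
  -- the shifted point's first coordinate is T
  have hσ1 : (∑' k : ℕ, bval (shiftσ s (-(k + 1 : ℕ))) * (β⁻¹) ^ (k + 1)) = T := by
    rw [hT_def]
    exact tsum_congr fun k => rfl
  have hT0 : 0 ≤ T := tsum_nonneg fun k => mul_nonneg (bval_nonneg _) (hu1' k)
  have hT1 : T ≤ 1 := by
    have h := hs.1 (-1)
    have : T = ∑' k : ℕ, bval (s (-1 - ((k : ℤ) + 1))) * (β⁻¹) ^ (k + 1) := by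
      refine tsum_congr fun k => ?_
      have h1 : (-(k + 1 : ℕ) : ℤ) - 1 = -1 - ((k : ℤ) + 1) := by push_cast; ring
      rw [h1]
    rw [this]; exact h
  simp only [codingMap, shiftσ, skewMap, hσ1, hy]
  cases hb : s (-1) with
  | false =>
    have hb' : bval (s (-1)) = 0 := by rw [hb]; rfl
    have hxval : x = β⁻¹ * T := by rw [hx, hb']; ring
    have hle : x ≤ β⁻¹ := by
      rw [hxval]
      calc β⁻¹ * T ≤ β⁻¹ * 1 := by
            exact mul_le_mul_of_nonneg_left hT1 hr0
        _ = β⁻¹ := mul_one _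
    refine (if_pos hle).trans ?_
    refine Prod.ext ?_ ?_
    · show β * x = T
      rw [hxval, ← mul_assoc, mul_inv_cancel₀ (ne_of_gt hβ0), one_mul]
    · show τ * Y = bval false * (1 - τ) + τ * Y
      rw [show bval false = (0:ℝ) from rfl]; ring
  | true =>
    have hb' : bval (s (-1)) = 1 := by rw [hb]; rfl
    have hxval : x = β⁻¹ + β⁻¹ * T := by rw [hx, hb']; ring
    -- T > 0 using the star condition
    have hTpos : 0 < T := by
      have hstar := hs.2
      simp only [Set.mem_setOf_eq, not_exists, not_forall] at hstar
      obtain ⟨j, hj1, hj2⟩ := hstar (-2)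
      have hjtrue : s j = true := by
        revert hj2; cases s j <;> simp
      set k : ℕ := (-j - 2).toNat with hk
      have hjk : (-(k + 1 : ℕ) : ℤ) - 1 = j := by
        have : ((-j - 2).toNat : ℤ) = -j - 2 := Int.toNat_of_nonneg (by linarith)
        push_cast [hk, this]; ring
      refine Summable.tsum_pos hsumT (fun k => mul_nonneg (bval_nonneg _) (hu1' k)) k ?_
      rw [hjk, hjtrue]
      have : bval true = 1 := rfl
      rw [this, one_mul]
      positivity
    have hlt : ¬ x ≤ β⁻¹ := by
      rw [hxval]
      push_neg
      nlinarith [mul_pos (inv_pos.mpr hβ0) hTpos]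
    refine (if_neg hlt).trans ?_
    refine Prod.ext ?_ ?_
    · show β * x - 1 = T
      rw [hxval, mul_add, ← mul_assoc, mul_inv_cancel₀ (ne_of_gt hβ0)]; ring
    · show τ * Y + (1 - τ) = bval true * (1 - τ) + τ * Y
      rw [show bval true = (1:ℝ) from rfl]; ring
end

section
/- The dynamical system (Λ_{β,τ}, f) is topologically mixing: for any nonempty open subsets A, B of Λ_{β,τ} there exists N ∈ ℕ such that f^n(A) ∩ B ≠ ∅ for all n > N. -/
open Set

/-- The attractor `Λ_{β,τ} = closure(⋂_{i≥0} f^i([0,1]²))`. -/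
noncomputable def attractor (β τ : ℝ) : Set (ℝ × ℝ) :=
  closure (⋂ i : ℕ, (skewMap β τ)^[i] '' (Icc (0:ℝ) 1 ×ˢ Icc (0:ℝ) 1))

namespace Stmt9Aux

/-- the one-dimensional β-map -/
noncomputable def bmap (β : ℝ) (x : ℝ) : ℝ := if x ≤ β⁻¹ then β * x else β * x - 1

lemma iter_sub {T : ℝ → ℝ} {i j : ℕ} {R S : Set ℝ} (h : S ⊆ T^[i] '' R) :
    T^[j] '' S ⊆ T^[j + i] '' R := by
  intro y hy
  obtain ⟨x, hx, rfl⟩ := hy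
  obtain ⟨z, hz, hzx⟩ := h hx
  exact ⟨z, hz, by rw [Function.iterate_add_apply, hzx]⟩

section OneD

variable {β : ℝ}

lemma image_Ioc_left (hβ : 1 < β) {l r : ℝ} (hr : r ≤ β⁻¹) :
    Ioc (β * l) (β * r) ⊆ bmap β '' Ioc l r := by
  have hb : (0:ℝ) < β := one_pos.trans hβ
  intro y hy
  have h1 : l < y / β := by rw [lt_div_iff₀ hb]; linarith [hy.1]
  have h2 : y / β ≤ r := by rw [div_le_iff₀ hb]; linarith [hy.2]
  refine ⟨y / β, ⟨h1, h2⟩, ?_⟩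
  rw [bmap, if_pos (h2.trans hr)]
  field_simp

lemma image_Ioc_right (hβ : 1 < β) {l r : ℝ} :
    Ioc (max (β * l - 1) 0) (β * r - 1) ⊆ bmap β '' Ioc l r := by
  have hb : (0:ℝ) < β := one_pos.trans hβ
  intro y hy
  have hy0 : 0 < y := lt_of_le_of_lt (le_max_right _ _) hy.1
  have hyl : β * l - 1 < y := lt_of_le_of_lt (le_max_left _ _) hy.1
  have h1 : l < (y + 1) / β := by rw [lt_div_iff₀ hb]; linarith
  have h2 : (y + 1) / β ≤ r := by rw [div_le_iff₀ hb]; linarith [hy.2]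
  have h3 : ¬ ((y + 1) / β ≤ β⁻¹) := by
    rw [not_le, inv_eq_one_div, div_lt_div_iff₀ hb hb]
    nlinarith
  refine ⟨(y + 1) / β, ⟨h1, h2⟩, ?_⟩
  rw [bmap, if_neg h3]
  field_simp
  ring

lemma phase1 (hβ : 1 < β) (hβ2 : β < 2) :
    ∀ (n : ℕ) (l r : ℝ), 0 ≤ l → l < r → r ≤ 1 → 1 < β ^ n * (r - l) →
    ∃ (K : ℕ) (s : ℝ), 0 < s ∧ s ≤ 1 ∧ Ioc 0 s ⊆ (bmap β)^[K] '' Ioc l r := by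
  have hb : (0:ℝ) < β := one_pos.trans hβ
  have hbi : β⁻¹ < 1 := inv_lt_one_of_one_lt₀ hβ
  have hbi0 : (0:ℝ) < β⁻¹ := by positivity
  have hbb : β * β⁻¹ = 1 := mul_inv_cancel₀ (ne_of_gt hb)
  intro n
  induction n with
  | zero => intro l r hl hlr hr hfuel; simp at hfuel; nlinarith
  | succ n ih =>
    intro l r hl hlr hr hfuel
    have hfuel' : ∀ l' r' : ℝ, r' - l' = β * (r - l) → 1 < β ^ n * (r' - l') := by
      intro l' r' h
      rw [h, pow_succ] at *
      nlinarith
    by_cases h1 : r ≤ β⁻¹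
    · obtain ⟨K, s, hs0, hs1, hsub⟩ := ih (β * l) (β * r) (by positivity)
        (by nlinarith) (by rw [← mul_inv_cancel₀ (ne_of_gt hb)]; nlinarith)
        (hfuel' _ _ (by ring))
      refine ⟨K + 1, s, hs0, hs1, ?_⟩
      intro y hy
      have : (bmap β)^[K] '' (Ioc (β*l) (β*r)) ⊆ (bmap β)^[K+1] '' Ioc l r := by
        have := iter_sub (T := bmap β) (j := K) (i := 1)
          (R := Ioc l r) (S := Ioc (β*l) (β*r)) (by simpa using image_Ioc_left hβ h1)
        simpa using this
      exact this (hsub hy)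
    · push_neg at h1
      by_cases h2 : l < β⁻¹
      · refine ⟨1, β * r - 1,
          by nlinarith [mul_lt_mul_of_pos_left h1 hb],
          by nlinarith [mul_le_mul_of_nonneg_left hr hb.le], ?_⟩
        have hmax : max (β * l - 1) 0 = 0 := by
          apply max_eq_right; nlinarith [mul_lt_mul_of_pos_left h2 hb]
        simpa [hmax] using image_Ioc_right hβ (l := l) (r := r)
      · push_neg at h2
        obtain ⟨K, s, hs0, hs1, hsub⟩ := ih (β * l - 1) (β * r - 1)
          (by nlinarith [mul_le_mul_of_nonneg_left h2 hb.le])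
          (by nlinarith [mul_lt_mul_of_pos_left hlr hb])
          (by nlinarith [mul_le_mul_of_nonneg_left hr hb.le])
          (hfuel' _ _ (by ring))
        refine ⟨K + 1, s, hs0, hs1, ?_⟩
        intro y hy
        have hstep : Ioc (β*l - 1) (β*r - 1) ⊆ bmap β '' Ioc l r := by
          have hmax : max (β * l - 1) 0 = β * l - 1 := by
            apply max_eq_left; nlinarith [mul_le_mul_of_nonneg_left h2 hb.le]
          simpa [hmax] using image_Ioc_right hβ (l := l) (r := r)
        have := iter_sub (T := bmap β) (j := K) (i := 1)
          (R := Ioc l r) (S := Ioc (β*l-1) (β*r-1)) (by simpa using hstep)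
        simpa using this (hsub hy)

lemma growLeft (hβ : 1 < β) :
    ∀ (n : ℕ) (s : ℝ), 0 < s → s ≤ 1 → 1 < β ^ n * s →
    ∃ K : ℕ, Ioc (0:ℝ) 1 ⊆ (bmap β)^[K] '' Ioc 0 s := by
  have hb : (0:ℝ) < β := one_pos.trans hβ
  intro n
  induction n with
  | zero => intro s hs0 hs1 hfuel; simp at hfuel; nlinarith
  | succ n ih =>
    intro s hs0 hs1 hfuel
    by_cases h1 : s ≤ β⁻¹
    · obtain ⟨K, hsub⟩ := ih (β * s) (by positivity)
        (by rw [← mul_inv_cancel₀ (ne_of_gt hb)]; nlinarith)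
        (by rw [pow_succ] at hfuel; nlinarith)
      refine ⟨K + 1, ?_⟩
      intro y hy
      have hstep : Ioc (0:ℝ) (β * s) ⊆ bmap β '' Ioc 0 s := by
        simpa using image_Ioc_left hβ (l := 0) h1
      have := iter_sub (T := bmap β) (j := K) (i := 1)
        (R := Ioc 0 s) (S := Ioc 0 (β*s)) (by simpa using hstep)
      simpa using this (hsub hy)
    · push_neg at h1
      refine ⟨1, ?_⟩
      intro y hy
      have h2 : y / β ≤ β⁻¹ := by
        rw [div_le_iff₀ hb, inv_mul_cancel₀ (ne_of_gt hb)]; exact hy.2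
      refine ⟨y / β, ⟨div_pos hy.1 hb, (lt_of_le_of_lt h2 h1).le⟩, ?_⟩
      simp only [Function.iterate_one]
      rw [bmap, if_pos h2]; field_simp

lemma absorb (hβ : 1 < β) : Ioc (0:ℝ) 1 ⊆ bmap β '' Ioc 0 1 := by
  have hb : (0:ℝ) < β := one_pos.trans hβ
  intro y hy
  have h2 : y / β ≤ β⁻¹ := by
    rw [div_le_iff₀ hb, inv_mul_cancel₀ (ne_of_gt hb)]; exact hy.2
  have hbi : β⁻¹ ≤ 1 := le_of_lt (inv_lt_one_of_one_lt₀ hβ)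
  refine ⟨y / β, ⟨div_pos hy.1 hb, h2.trans hbi⟩, ?_⟩
  rw [bmap, if_pos h2]; field_simp

lemma absorbIter (hβ : 1 < β) : ∀ j : ℕ, Ioc (0:ℝ) 1 ⊆ (bmap β)^[j] '' Ioc 0 1 := by
  intro j
  induction j with
  | zero => simp
  | succ j ih =>
    have := iter_sub (T := bmap β) (j := j) (i := 1)
      (R := Ioc 0 1) (S := Ioc 0 1) (by simpa using absorb hβ)
    intro y hy
    simpa using this (ih hy)

lemma leoMain (hβ : 1 < β) (hβ2 : β < 2) {l r : ℝ} (hl : 0 ≤ l) (hlr : l < r) (hr : r ≤ 1) :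
    ∃ N : ℕ, ∀ k ≥ N, ∀ v ∈ Ioc (0:ℝ) 1, ∃ u ∈ Ioc l r, (bmap β)^[k] u = v := by
  obtain ⟨n, hn⟩ := pow_unbounded_of_one_lt (1 / (r - l)) hβ
  have hfuel : 1 < β ^ n * (r - l) := by
    rw [div_lt_iff₀ (by linarith)] at hn; linarith
  obtain ⟨K1, s, hs0, hs1, h1⟩ := phase1 hβ hβ2 n l r hl hlr hr hfuel
  obtain ⟨n2, hn2⟩ := pow_unbounded_of_one_lt (1 / s) hβ
  have hfuel2 : 1 < β ^ n2 * s := by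
    rw [div_lt_iff₀ hs0] at hn2; linarith
  obtain ⟨K2, h2⟩ := growLeft hβ n2 s hs0 hs1 hfuel2
  refine ⟨K1 + K2, ?_⟩
  intro k hk v hv
  have hchain : Ioc (0:ℝ) 1 ⊆ (bmap β)^[k] '' Ioc l r := by
    have c1 : (bmap β)^[k - K1 - K2] '' Ioc (0:ℝ) 1 ⊆ (bmap β)^[k - K1] '' Ioc 0 s := by
      have := iter_sub (T := bmap β) (j := k - K1 - K2) (i := K2)
        (R := Ioc 0 s) (S := Ioc 0 1) h2
      have he : k - K1 - K2 + K2 = k - K1 := by omega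
      rwa [he] at this
    have c2 : (bmap β)^[k - K1] '' Ioc (0:ℝ) s ⊆ (bmap β)^[k] '' Ioc l r := by
      have := iter_sub (T := bmap β) (j := k - K1) (i := K1)
        (R := Ioc l r) (S := Ioc 0 s) h1
      have he : k - K1 + K1 = k := by omega
      rwa [he] at this
    intro y hy
    exact c2 (c1 (absorbIter hβ (k - K1 - K2) hy))
  obtain ⟨u, hu, huv⟩ := hchain hv
  exact ⟨u, hu, huv⟩

end OneD

section TwoD

variable {β τ : ℝ}

/-- the square -/
def sq : Set (ℝ × ℝ) := Icc (0:ℝ) 1 ×ˢ Icc (0:ℝ) 1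

/-- the core set -/
noncomputable def Core (β τ : ℝ) : Set (ℝ × ℝ) :=
  ⋂ i : ℕ, (skewMap β τ)^[i] '' (Icc (0:ℝ) 1 ×ˢ Icc (0:ℝ) 1)

lemma mem_sq {p : ℝ × ℝ} : p ∈ sq ↔ (0 ≤ p.1 ∧ p.1 ≤ 1) ∧ (0 ≤ p.2 ∧ p.2 ≤ 1) := by
  rw [sq, Set.mem_prod, Set.mem_Icc, Set.mem_Icc]

lemma skew_fst_le {p : ℝ × ℝ} (h : p.1 ≤ β⁻¹) : skewMap β τ p = (β * p.1, τ * p.2) := by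
  rw [skewMap, if_pos h]

lemma skew_fst_gt {p : ℝ × ℝ} (h : ¬ p.1 ≤ β⁻¹) :
    skewMap β τ p = (β * p.1 - 1, τ * p.2 + (1 - τ)) := by
  rw [skewMap, if_neg h]

lemma sq_maps (hβ : 1 < β) (hβ2 : β < 2) (hτ0 : 0 < τ) (hτ : τ < 1/2) :
    ∀ p ∈ sq, skewMap β τ p ∈ sq := by
  have hb : (0:ℝ) < β := one_pos.trans hβ
  have hbb : β * β⁻¹ = 1 := mul_inv_cancel₀ (ne_of_gt hb)
  intro p hp
  rw [mem_sq] at hp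
  obtain ⟨⟨h1, h2⟩, ⟨h3, h4⟩⟩ := hp
  by_cases h : p.1 ≤ β⁻¹
  · rw [skew_fst_le h, mem_sq]
    dsimp only
    refine ⟨⟨by positivity, ?_⟩, by positivity, ?_⟩
    · nlinarith [mul_le_mul_of_nonneg_left h hb.le]
    · nlinarith
  · rw [skew_fst_gt h, mem_sq]
    dsimp only
    push_neg at h
    refine ⟨⟨by nlinarith [mul_lt_mul_of_pos_left h hb], ?_⟩, by nlinarith, ?_⟩
    · nlinarith [mul_le_mul_of_nonneg_left h2 hb.le]
    · nlinarith

lemma sq_iter (hβ : 1 < β) (hβ2 : β < 2) (hτ0 : 0 < τ) (hτ : τ < 1/2) :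
    ∀ (j : ℕ) (p : ℝ × ℝ), p ∈ sq → (skewMap β τ)^[j] p ∈ sq := by
  intro j
  induction j with
  | zero => intro p hp; simpa using hp
  | succ j ih =>
    intro p hp
    rw [Function.iterate_succ_apply]
    exact ih _ (sq_maps hβ hβ2 hτ0 hτ p hp)

lemma core_sub_sq {p : ℝ × ℝ} (hp : p ∈ Core β τ) : p ∈ sq := by
  have := mem_iInter.mp hp 0
  simpa [sq] using this

lemma core_step (hβ : 1 < β) (hβ2 : β < 2) (hτ0 : 0 < τ) (hτ : τ < 1/2)
    {p : ℝ × ℝ} (hp : p ∈ Core β τ) : skewMap β τ p ∈ Core β τ := by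
  rw [Core, mem_iInter]
  intro i
  match i with
  | 0 =>
    simp only [Function.iterate_zero, Set.image_id]
    exact sq_maps hβ hβ2 hτ0 hτ p (core_sub_sq hp)
  | (i+1) =>
    obtain ⟨q, hq, hqe⟩ := mem_iInter.mp hp i
    exact ⟨q, hq, by rw [Function.iterate_succ_apply', hqe]⟩

lemma core_iter (hβ : 1 < β) (hβ2 : β < 2) (hτ0 : 0 < τ) (hτ : τ < 1/2)
    {p : ℝ × ℝ} (hp : p ∈ Core β τ) (n : ℕ) : (skewMap β τ)^[n] p ∈ Core β τ := by
  induction n with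
  | zero => simpa using hp
  | succ n ih =>
    rw [Function.iterate_succ_apply']
    exact core_step hβ hβ2 hτ0 hτ ih

lemma iter_fst (hβ : 1 < β) : ∀ (k : ℕ) (p : ℝ × ℝ),
    ((skewMap β τ)^[k] p).1 = (bmap β)^[k] p.1 := by
  intro k
  induction k with
  | zero => intro p; rfl
  | succ k ih =>
    intro p
    rw [Function.iterate_succ_apply, Function.iterate_succ_apply]
    rw [ih (skewMap β τ p)]
    congr 1
    by_cases h : p.1 ≤ β⁻¹
    · rw [skew_fst_le h, bmap, if_pos h]
    · rw [skew_fst_gt h, bmap, if_neg h]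

lemma zchain (hβ : 1 < β) : ∀ (m : ℕ) (x : ℝ), 0 ≤ x → x ≤ 1 →
    (skewMap β τ)^[m] (x / β ^ m, (0:ℝ)) = (x, 0) := by
  have hb : (0:ℝ) < β := one_pos.trans hβ
  intro m
  induction m with
  | zero => intro x _ _; simp
  | succ m ih =>
    intro x hx0 hx1
    have hpow : (1:ℝ) ≤ β ^ m := one_le_pow₀ hβ.le
    have hle : x / β ^ (m+1) ≤ β⁻¹ := by
      rw [div_le_iff₀ (by positivity), inv_mul_eq_div, le_div_iff₀ hb, pow_succ]
      nlinarith
    rw [Function.iterate_succ_apply]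
    have hstep : skewMap β τ (x / β ^ (m+1), (0:ℝ)) = (x / β ^ m, 0) := by
      rw [skew_fst_le hle]
      have : β * (x / β ^ (m+1)) = x / β ^ m := by
        field_simp [pow_succ]; ring
      rw [this, mul_zero]
    rw [hstep]
    exact ih x hx0 hx1

lemma zchain_core (hβ : 1 < β) {x : ℝ} (hx0 : 0 ≤ x) (hx1 : x ≤ 1) :
    ((x, (0:ℝ)) : ℝ × ℝ) ∈ Core β τ := by
  rw [Core, mem_iInter]
  intro i
  have hb : (0:ℝ) < β := one_pos.trans hβ
  have hpow : (1:ℝ) ≤ β ^ i := one_le_pow₀ hβ.le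
  refine ⟨(x / β ^ i, 0), ?_, zchain hβ i x hx0 hx1⟩
  constructor
  · constructor
    · positivity
    · rw [div_le_one (by positivity)]; linarith
  · simp

lemma zeroY (hβ : 1 < β) (hτ0 : 0 < τ) (hτ : τ < 1/2)
    {a : ℝ × ℝ} (ha : a ∈ Core β τ) (h1 : a.1 = 0) : a.2 = 0 := by
  have hb : (0:ℝ) < β := one_pos.trans hβ
  have key : ∀ (K : ℕ) (q : ℝ × ℝ), q ∈ sq → ((skewMap β τ)^[K] q).1 = 0 →
      ((skewMap β τ)^[K] q).2 ≤ τ ^ K := by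
    intro K
    induction K with
    | zero => intro q hq _; simpa using (mem_sq.mp hq).2.2
    | succ K ih =>
      intro q hq h0
      rw [Function.iterate_succ_apply'] at h0 ⊢
      set r := (skewMap β τ)^[K] q with hr
      by_cases hc : r.1 ≤ β⁻¹
      · rw [skew_fst_le hc] at h0 ⊢
        simp only at h0 ⊢
        have hr1 : r.1 = 0 := by
          have := h0
          rcases mul_eq_zero.mp this with h | h
          · exact absurd h (ne_of_gt hb)
          · exact h
        have := ih q hq hr1
        rw [pow_succ]
        calc τ * r.2 ≤ τ * τ ^ K := by nlinarith
        _ = τ ^ K * τ := by ring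
      · rw [skew_fst_gt hc] at h0
        simp only at h0
        push_neg at hc
        have : (0:ℝ) < β * r.1 - 1 := by
          have hbb : β * β⁻¹ = 1 := mul_inv_cancel₀ (ne_of_gt hb)
          nlinarith [mul_lt_mul_of_pos_left hc hb]
        linarith [h0 ▸ this]
  have hub : ∀ K : ℕ, a.2 ≤ τ ^ K := by
    intro K
    obtain ⟨q, hq, hqe⟩ := mem_iInter.mp ha K
    have : q ∈ sq := by simpa [sq] using hq
    have := key K q this (by rw [hqe]; exact h1)
    rwa [hqe] at this
  have h2 : 0 ≤ a.2 := (mem_sq.mp (core_sub_sq ha)).2.1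
  by_contra hne
  have hpos : 0 < a.2 := lt_of_le_of_ne h2 (Ne.symm hne)
  obtain ⟨K, hK⟩ := exists_pow_lt_of_lt_one hpos (by linarith : τ < 1)
  exact absurd (hub K) (not_le.mpr hK)

lemma parallel (hτ0 : 0 < τ) : ∀ (M : ℕ) (p q : ℝ × ℝ), p.1 = q.1 →
    ((skewMap β τ)^[M] p).1 = ((skewMap β τ)^[M] q).1 ∧
    |((skewMap β τ)^[M] p).2 - ((skewMap β τ)^[M] q).2| ≤ τ ^ M * |p.2 - q.2| := by
  intro M
  induction M with
  | zero => intro p q h; simp [h]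
  | succ M ih =>
    intro p q h
    have hstep1 : (skewMap β τ p).1 = (skewMap β τ q).1 := by
      by_cases hc : p.1 ≤ β⁻¹
      · rw [skew_fst_le hc, skew_fst_le (h ▸ hc), h]
      · rw [skew_fst_gt hc, skew_fst_gt (h ▸ hc), h]
    have hstep2 : |(skewMap β τ p).2 - (skewMap β τ q).2| = τ * |p.2 - q.2| := by
      by_cases hc : p.1 ≤ β⁻¹
      · rw [skew_fst_le hc, skew_fst_le (h ▸ hc)]
        simp only
        rw [← mul_sub, abs_mul, abs_of_pos hτ0]
      · rw [skew_fst_gt hc, skew_fst_gt (h ▸ hc)]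
        simp only
        have : τ * p.2 + (1 - τ) - (τ * q.2 + (1 - τ)) = τ * (p.2 - q.2) := by ring
        rw [this, abs_mul, abs_of_pos hτ0]
    rw [Function.iterate_succ_apply, Function.iterate_succ_apply]
    obtain ⟨i1, i2⟩ := ih (skewMap β τ p) (skewMap β τ q) hstep1
    refine ⟨i1, ?_⟩
    calc |((skewMap β τ)^[M] (skewMap β τ p)).2 - ((skewMap β τ)^[M] (skewMap β τ q)).2|
        ≤ τ ^ M * |(skewMap β τ p).2 - (skewMap β τ q).2| := i2
      _ = τ ^ M * (τ * |p.2 - q.2|) := by rw [hstep2]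
      _ = τ ^ (M+1) * |p.2 - q.2| := by rw [pow_succ]; ring


lemma pastCore (hβ : 1 < β) (hβ2 : β < 2) (hτ0 : 0 < τ) (hτ : τ < 1/2)
    {a : ℝ × ℝ} (ha : a ∈ Core β τ) {x0 : ℝ} (hx0 : 0 < x0) (hx0a : x0 ≤ a.1) (K : ℕ) :
    ∃ y0 : ℝ, 0 ≤ y0 ∧ y0 ≤ 1 ∧ |y0 - a.2| ≤ τ ^ K ∧ ((x0, y0) : ℝ × ℝ) ∈ Core β τ := by
  have hb : (0:ℝ) < β := one_pos.trans hβ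
  obtain ⟨q0, hq0', hq0K⟩ := mem_iInter.mp ha K
  have hq0 : q0 ∈ sq := by simpa [sq] using hq0'
  set f : ℝ × ℝ → ℝ × ℝ := skewMap β τ with hf
  set w : ℕ → ℝ × ℝ := fun j => f^[j] q0 with hw
  have hwK : w K = a := hq0K
  have hwsq : ∀ j, w j ∈ sq := fun j => sq_iter hβ hβ2 hτ0 hτ j q0 hq0
  have hwstep : ∀ j, w (j+1) = f (w j) := fun j => Function.iterate_succ_apply' f j q0
  set D : ℝ := (a.1 - x0) / β ^ K with hD
  have hD0 : 0 ≤ D := div_nonneg (by linarith) (by positivity)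
  set ξ : ℕ → ℝ := fun j => (w j).1 - β ^ j * D with hξ
  set η : ℕ → ℝ := fun j => (w j).2 - τ ^ j * q0.2 with hη
  have hξK : ξ K = x0 := by
    have h1 : β ^ K * D = a.1 - x0 := by
      rw [hD, mul_div_cancel₀ _ (by positivity : (β:ℝ) ^ K ≠ 0)]
    simp only [hξ, hwK, h1]; ring
  have hξle : ∀ j, ξ j ≤ (w j).1 := by
    intro j
    have : 0 ≤ β ^ j * D := by positivity
    simp only [hξ]; linarith
  have hηup : ∀ j, η j ≤ (w j).2 := by
    intro j
    have h0 : 0 ≤ q0.2 := (mem_sq.mp hq0).2.1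
    have : 0 ≤ τ ^ j * q0.2 := by positivity
    simp only [hη]; linarith
  have hηlow : ∀ j, 0 ≤ η j := by
    intro j
    induction j with
    | zero =>
      have : w 0 = q0 := rfl
      simp [hη, this]
    | succ j ih =>
      have hst := hwstep j
      simp only [hη] at ih ⊢
      by_cases hc : (w j).1 ≤ β⁻¹
      · rw [hst, hf, skew_fst_le hc]
        dsimp only
        rw [pow_succ]
        nlinarith
      · rw [hst, hf, skew_fst_gt hc]
        dsimp only
        rw [pow_succ]
        nlinarith
  have hη0 : η 0 = 0 := by
    have : w 0 = q0 := rfl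
    simp [hη, this]
  -- main downward induction
  have main : ∀ d, d ≤ K → 0 < ξ (K - d) ∧ f^[d] (ξ (K - d), η (K - d)) = (x0, η K) := by
    intro d
    induction d with
    | zero =>
      intro _
      constructor
      · simpa [hξK] using hx0
      · simp [hξK]
    | succ d ih =>
      intro hdK
      obtain ⟨hpos, hiter⟩ := ih (by omega)
      set j := K - (d+1) with hj
      have hj1 : j + 1 = K - d := by omega
      have hpos' : 0 < ξ (j+1) := by rw [hj1]; exact hpos
      have hwst : w (j+1) = f (w j) := hwstep j
      have hstep : f (ξ j, η j) = (ξ (j+1), η (j+1)) ∧ 0 < ξ j := by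
        by_cases hc : (w j).1 ≤ β⁻¹
        · have h1 : (w (j+1)).1 = β * (w j).1 := by rw [hwst, hf, skew_fst_le hc]
          have h2 : (w (j+1)).2 = τ * (w j).2 := by rw [hwst, hf, skew_fst_le hc]
          have e1 : β * ξ j = ξ (j+1) := by
            simp only [hξ]; rw [h1, pow_succ]; ring
          have e2 : τ * η j = η (j+1) := by
            simp only [hη]; rw [h2, pow_succ]; ring
          have hxile : ξ j ≤ β⁻¹ := (hξle j).trans hc
          have hfp : f (ξ j, η j) = (β * ξ j, τ * η j) := skew_fst_le hxile
          have hposj : 0 < ξ j := by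
            rw [← e1] at hpos'
            by_contra hcon
            push_neg at hcon
            nlinarith
          exact ⟨by rw [hfp, e1, e2], hposj⟩
        · have h1 : (w (j+1)).1 = β * (w j).1 - 1 := by rw [hwst, hf, skew_fst_gt hc]
          have h2 : (w (j+1)).2 = τ * (w j).2 + (1 - τ) := by rw [hwst, hf, skew_fst_gt hc]
          have e1 : β * ξ j - 1 = ξ (j+1) := by
            simp only [hξ]; rw [h1, pow_succ]; ring
          have e2 : τ * η j + (1 - τ) = η (j+1) := by
            simp only [hη]; rw [h2, pow_succ]; ring
          have hbb : β * β⁻¹ = 1 := mul_inv_cancel₀ (ne_of_gt hb)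
          have hgt : ¬ (ξ j ≤ β⁻¹) := by
            rw [← e1] at hpos'
            intro hcon
            have h3 : β * ξ j ≤ β * β⁻¹ := mul_le_mul_of_nonneg_left hcon hb.le
            rw [hbb] at h3
            linarith
          have hfp : f (ξ j, η j) = (β * ξ j - 1, τ * η j + (1 - τ)) := skew_fst_gt hgt
          have hposj : 0 < ξ j := by
            push_neg at hgt
            have h4 : 0 < β⁻¹ := by positivity
            exact lt_trans h4 hgt
          exact ⟨by rw [hfp, e1, e2], hposj⟩
      refine ⟨hstep.2, ?_⟩
      rw [Function.iterate_succ_apply, hstep.1, hj1]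
      exact hiter
  -- bounds on η K and conclusion
  have hsqmem : ∀ j, j ≤ K → ((ξ j, η j) : ℝ × ℝ) ∈ sq := by
    intro j hjK
    have h1 := (main (K - j) (by omega))
    have hjj : K - (K - j) = j := by omega
    rw [hjj] at h1
    rw [mem_sq]
    refine ⟨⟨h1.1.le, (hξle j).trans (mem_sq.mp (hwsq j)).1.2⟩,
      hηlow j, (hηup j).trans (mem_sq.mp (hwsq j)).2.2⟩
  refine ⟨η K, hηlow K, (hηup K).trans (mem_sq.mp (hwsq K)).2.2, ?_, ?_⟩
  · have h0 : 0 ≤ q0.2 := (mem_sq.mp hq0).2.1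
    have h1 : q0.2 ≤ 1 := (mem_sq.mp hq0).2.2
    have : η K - a.2 = -(τ ^ K * q0.2) := by simp only [hη, hwK]; ring
    rw [this, abs_neg, abs_of_nonneg (by positivity)]
    nlinarith [pow_pos hτ0 K]
  · rw [Core, mem_iInter]
    intro i
    by_cases hiK : i ≤ K
    · obtain ⟨hpos, hiter⟩ := main i hiK
      have := hsqmem (K - i) (by omega)
      exact ⟨(ξ (K - i), η (K - i)), by simpa [sq] using this, hiter⟩
    · push_neg at hiK
      obtain ⟨m, rfl⟩ : ∃ m, i = K + m := ⟨i - K, by omega⟩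
      obtain ⟨hpos0, hiter0⟩ := main K (le_refl K)
      have hK0 : K - K = 0 := by omega
      rw [hK0] at hpos0 hiter0
      have hξ01 : ξ 0 ≤ 1 := (hξle 0).trans (mem_sq.mp (hwsq 0)).1.2
      have hwit : f^[K + m] ((ξ 0 / β ^ m, 0) : ℝ × ℝ) = (x0, η K) := by
        rw [Function.iterate_add_apply]
        have hz : f^[m] ((ξ 0 / β ^ m, 0) : ℝ × ℝ) = (ξ 0, 0) := by
          rw [hf]; exact zchain hβ m (ξ 0) hpos0.le hξ01
        rw [hz, ← hη0]
        exact hiter0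
      refine ⟨(ξ 0 / β ^ m, 0), ?_, hwit⟩
      have hpow : (1:ℝ) ≤ β ^ m := one_le_pow₀ hβ.le
      constructor
      · constructor
        · positivity
        · rw [div_le_one (by positivity)]; linarith
      · simp

end TwoD
end Stmt9Aux

lemma bmap_zero_iter {β : ℝ} (hβ : 1 < β) : ∀ M : ℕ, (Stmt9Aux.bmap β)^[M] 0 = 0 := by
  have hb : (0:ℝ) < β := one_pos.trans hβ
  intro M
  induction M with
  | zero => rfl
  | succ M ih =>
    rw [Function.iterate_succ_apply]
    have : Stmt9Aux.bmap β 0 = 0 := by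
      rw [Stmt9Aux.bmap, if_pos (by positivity : (0:ℝ) ≤ β⁻¹)]
      ring
    rw [this, ih]

/-- The system `(Λ_{β,τ}, f)` is topologically mixing: for any nonempty sets
`A, B ⊆ Λ_{β,τ}` that are open in the subspace topology of the attractor,
there is `N` such that `f^n(A) ∩ B ≠ ∅` for all `n > N`. -/
theorem stmt9 (β τ : ℝ) (hβ : 1 < β) (hβ2 : β < 2) (hτ0 : 0 < τ) (hτ : τ < 1 / 2)
    (A B : Set (ℝ × ℝ))
    (hA : ∃ U : Set (ℝ × ℝ), IsOpen U ∧ A = attractor β τ ∩ U)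
    (hB : ∃ V : Set (ℝ × ℝ), IsOpen V ∧ B = attractor β τ ∩ V)
    (hAne : A.Nonempty) (hBne : B.Nonempty) :
    ∃ N : ℕ, ∀ n > N, ((skewMap β τ)^[n] '' A ∩ B).Nonempty := by
  classical
  have hb : (0:ℝ) < β := one_pos.trans hβ
  have hτ1 : τ < 1 := by linarith
  obtain ⟨U, hU, hAeq⟩ := hA
  obtain ⟨V, hV, hBeq⟩ := hB
  have hattr : attractor β τ = closure (Stmt9Aux.Core β τ) := rfl
  obtain ⟨a0, ha0⟩ := hAne
  rw [hAeq, hattr] at ha0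
  obtain ⟨a, haU, haC⟩ := mem_closure_iff.mp ha0.1 U hU ha0.2
  obtain ⟨εa, hεa, hballa⟩ := Metric.isOpen_iff.mp hU a haU
  obtain ⟨b0, hb0⟩ := hBne
  rw [hBeq, hattr] at hb0
  obtain ⟨b, hbV, hbC⟩ := mem_closure_iff.mp hb0.1 V hV hb0.2
  obtain ⟨εb, hεb, hballb⟩ := Metric.isOpen_iff.mp hV b hbV
  obtain ⟨K, hK⟩ := exists_pow_lt_of_lt_one hεa hτ1
  obtain ⟨M, hM⟩ := exists_pow_lt_of_lt_one hεb hτ1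
  -- the source interval near a, with the core construction
  obtain ⟨l, r, hl0, hlr, hr1, hPA⟩ :
      ∃ l r : ℝ, 0 ≤ l ∧ l < r ∧ r ≤ 1 ∧
        ∀ x0 ∈ Ioc l r, ∃ p : ℝ × ℝ, p.1 = x0 ∧ p ∈ Stmt9Aux.Core β τ ∧ dist p a < εa := by
    have hasq := Stmt9Aux.core_sub_sq haC
    obtain ⟨⟨ha1, ha2⟩, _, _⟩ := Stmt9Aux.mem_sq.mp hasq
    by_cases hxa : a.1 = 0
    · have ha20 : a.2 = 0 := Stmt9Aux.zeroY hβ hτ0 hτ haC hxa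
      refine ⟨0, min (εa/2) 1, le_refl _, by positivity, min_le_right _ _, ?_⟩
      intro x0 hx0
      refine ⟨(x0, 0), rfl, Stmt9Aux.zchain_core hβ hx0.1.le (hx0.2.trans (min_le_right _ _)), ?_⟩
      rw [Prod.dist_eq, Real.dist_eq, Real.dist_eq]
      apply max_lt
      · rw [hxa, sub_zero, abs_of_pos hx0.1]
        calc x0 ≤ min (εa/2) 1 := hx0.2
          _ ≤ εa/2 := min_le_left _ _
          _ < εa := by linarith
      · rw [ha20, sub_zero, abs_zero]; exact hεa
    · have hxa' : 0 < a.1 := lt_of_le_of_ne ha1 (Ne.symm hxa)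
      refine ⟨max (a.1 - εa) 0, a.1, le_max_right _ _, max_lt (by linarith) hxa', ha2, ?_⟩
      intro x0 hx0
      have hx0pos : 0 < x0 := lt_of_le_of_lt (le_max_right _ _) hx0.1
      obtain ⟨y0, hy00, hy01, hy0d, hy0C⟩ :=
        Stmt9Aux.pastCore hβ hβ2 hτ0 hτ haC hx0pos hx0.2 K
      refine ⟨(x0, y0), rfl, hy0C, ?_⟩
      rw [Prod.dist_eq, Real.dist_eq, Real.dist_eq]
      apply max_lt
      · have : a.1 - εa < x0 := lt_of_le_of_lt (le_max_left _ _) hx0.1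
        rw [abs_sub_lt_iff]
        constructor <;> linarith [hx0.2]
      · exact lt_of_le_of_lt hy0d hK
  -- the target value for the β-map, with the landing estimate
  obtain ⟨bM, hbMsq', hbMe⟩ := mem_iInter.mp hbC M
  have hbMsq : bM ∈ Stmt9Aux.sq := by simpa [Stmt9Aux.sq] using hbMsq'
  obtain ⟨⟨hbM1, hbM2⟩, hbM3, hbM4⟩ := Stmt9Aux.mem_sq.mp hbMsq
  have hbsq := Stmt9Aux.core_sub_sq hbC
  obtain ⟨_, hb3, hb4⟩ := Stmt9Aux.mem_sq.mp hbsq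
  obtain ⟨w, hw0, hw1, hPB⟩ :
      ∃ w : ℝ, 0 < w ∧ w ≤ 1 ∧ ∀ z : ℝ × ℝ, z ∈ Stmt9Aux.Core β τ → z.1 = w →
        dist ((skewMap β τ)^[M] z) b < εb := by
    by_cases hv : 0 < bM.1
    · refine ⟨bM.1, hv, hbM2, ?_⟩
      intro z hz hz1
      obtain ⟨hp1, hp2⟩ := Stmt9Aux.parallel hτ0 M z bM hz1
      rw [hbMe] at hp1 hp2
      obtain ⟨_, hz3, hz4⟩ := Stmt9Aux.mem_sq.mp (Stmt9Aux.core_sub_sq hz)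
      rw [Prod.dist_eq, Real.dist_eq, Real.dist_eq]
      apply max_lt
      · rw [hp1, sub_self, abs_zero]; exact hεb
      · refine lt_of_le_of_lt (hp2.trans ?_) hM
        have h5 : |z.2 - bM.2| ≤ 1 := by
          rw [abs_le]; constructor <;> linarith
        nlinarith [pow_pos hτ0 M]
    · push_neg at hv
      have hv0 : bM.1 = 0 := le_antisymm hv hbM1
      have hb1 : b.1 = 0 := by
        rw [← hbMe, Stmt9Aux.iter_fst hβ, hv0, bmap_zero_iter hβ]
      have hb2 : b.2 = 0 := Stmt9Aux.zeroY hβ hτ0 hτ hbC hb1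
      have hρ0 : 0 < min (εb/2) 1 := by positivity
      have hρ1 : min (εb/2) 1 ≤ 1 := min_le_right _ _
      have hpow : (1:ℝ) ≤ β ^ M := one_le_pow₀ hβ.le
      refine ⟨min (εb/2) 1 / β ^ M, by positivity, ?_, ?_⟩
      · rw [div_le_one (by positivity)]; linarith
      · intro z hz hz1
        obtain ⟨hp1, hp2⟩ :=
          Stmt9Aux.parallel hτ0 M z ((min (εb/2) 1 / β ^ M, 0) : ℝ × ℝ) (by rw [hz1])
        have hzc : (skewMap β τ)^[M] ((min (εb/2) 1 / β ^ M, 0) : ℝ × ℝ) = (min (εb/2) 1, 0) :=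
          Stmt9Aux.zchain hβ M _ hρ0.le hρ1
        rw [hzc] at hp1 hp2
        obtain ⟨_, hz3, hz4⟩ := Stmt9Aux.mem_sq.mp (Stmt9Aux.core_sub_sq hz)
        rw [Prod.dist_eq, Real.dist_eq, Real.dist_eq]
        apply max_lt
        · rw [hp1, hb1]
          simp only [sub_zero]
          rw [abs_of_pos hρ0]
          calc min (εb/2) 1 ≤ εb/2 := min_le_left _ _
            _ < εb := by linarith
        · rw [hb2, sub_zero]
          simp only [sub_zero] at hp2
          refine lt_of_le_of_lt (hp2.trans ?_) hM
          have h5 : |z.2| ≤ 1 := by rw [abs_le]; constructor <;> linarith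
          nlinarith [pow_pos hτ0 M]
  -- expansion: preimages of w land in (l, r]
  obtain ⟨N0, hN0⟩ := Stmt9Aux.leoMain hβ hβ2 hl0 hlr hr1
  refine ⟨N0 + M, ?_⟩
  intro n hn
  set k := n - M with hkdef
  have hkN : N0 ≤ k := by omega
  have hn' : n = M + k := by omega
  obtain ⟨x0, hx0I, hx0v⟩ := hN0 k hkN w (Set.mem_Ioc.mpr ⟨hw0, hw1⟩)
  obtain ⟨p, hp1, hpC, hpa⟩ := hPA x0 hx0I
  have hpA : p ∈ A := by
    rw [hAeq]
    exact ⟨hattr ▸ subset_closure hpC, hballa (Metric.mem_ball.mpr hpa)⟩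
  have hzC : (skewMap β τ)^[k] p ∈ Stmt9Aux.Core β τ :=
    Stmt9Aux.core_iter hβ hβ2 hτ0 hτ hpC k
  have hz1 : ((skewMap β τ)^[k] p).1 = w := by
    rw [Stmt9Aux.iter_fst hβ, hp1, hx0v]
  have hfn : (skewMap β τ)^[n] p = (skewMap β τ)^[M] ((skewMap β τ)^[k] p) := by
    rw [hn', Function.iterate_add_apply]
  have hfB : (skewMap β τ)^[n] p ∈ B := by
    rw [hBeq]
    constructor
    · exact hattr ▸ subset_closure (Stmt9Aux.core_iter hβ hβ2 hτ0 hτ hpC n)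
    · apply hballb
      rw [Metric.mem_ball, hfn]
      exact hPB _ hzC hz1
  exact ⟨(skewMap β τ)^[n] p, ⟨p, hpA, rfl⟩, hfB⟩
end

section
/- The topological entropy of the system (Λ_{β,τ}, f) equals log β. -/
open Dynamics Set
open scoped ENNReal

namespace SkewProof

/-- The one-dimensional β-transformation. -/
noncomputable def Tb (β : ℝ) (x : ℝ) : ℝ := if x ≤ β⁻¹ then β * x else β * x - 1

lemma skew_fst (β τ : ℝ) (p : ℝ × ℝ) : (skewMap β τ p).1 = Tb β p.1 := by
  unfold skewMap Tb; split_ifs <;> rfl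

lemma skew_iter_fst (β τ : ℝ) (n : ℕ) (p : ℝ × ℝ) :
    ((skewMap β τ)^[n] p).1 = (Tb β)^[n] p.1 := by
  induction n generalizing p with
  | zero => rfl
  | succ n ih =>
    rw [Function.iterate_succ_apply, Function.iterate_succ_apply, ih, skew_fst]

section Beta

variable {β : ℝ} (hβ : 1 < β) (hβ2 : β < 2)
include hβ

lemma βpos : (0:ℝ) < β := lt_trans one_pos hβ

lemma βinv_lt_one : β⁻¹ < 1 := by
  rw [inv_lt_one_iff₀]; right; exact hβ

lemma Tb_mem (hβ2 : β < 2) {x : ℝ} (hx : x ∈ Icc (0:ℝ) 1) : Tb β x ∈ Icc (0:ℝ) 1 := by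
  rcases hx with ⟨h0, h1⟩
  unfold Tb
  split_ifs with h
  · constructor
    · positivity
    · calc β * x ≤ β * β⁻¹ := by
            apply mul_le_mul_of_nonneg_left h (βpos hβ).le
        _ = 1 := mul_inv_cancel₀ (βpos hβ).ne'
  · push_neg at h
    constructor
    · have : 1 < β * x := by
        have := (inv_lt_iff_one_lt_mul₀ (βpos hβ)).1 h
        linarith [this]
      linarith
    · nlinarith

lemma Tb_iter_mem (hβ2 : β < 2) {x : ℝ} (hx : x ∈ Icc (0:ℝ) 1) (n : ℕ) :
    (Tb β)^[n] x ∈ Icc (0:ℝ) 1 := by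
  induction n with
  | zero => exact hx
  | succ n ih => rw [Function.iterate_succ_apply']; exact Tb_mem hβ hβ2 ih

/-- The digit of `x`: `true` iff the second branch is used. -/
noncomputable def dig (β x : ℝ) : Bool := decide (β⁻¹ < x)

lemma Tb_of_dig_false {x : ℝ} (h : dig β x = false) : Tb β x = β * x := by
  unfold dig at h; unfold Tb
  rw [if_pos]; exact not_lt.1 (by simpa using h)

lemma Tb_of_dig_true {x : ℝ} (h : dig β x = true) : Tb β x = β * x - 1 := by
  unfold dig at h; unfold Tb
  rw [if_neg]; exact not_le.2 (by simpa using h)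

lemma Tb_sub_of_dig_eq {x y : ℝ} (h : dig β x = dig β y) : Tb β x - Tb β y = β * (x - y) := by
  cases hd : dig β x
  · rw [Tb_of_dig_false hβ hd, Tb_of_dig_false hβ (h ▸ hd)]; ring
  · rw [Tb_of_dig_true hβ hd, Tb_of_dig_true hβ (h ▸ hd)]; ring

/-- The word of length `n` of `x` (most recent digit first). -/
noncomputable def word (β : ℝ) : ℕ → ℝ → List Bool
  | 0, _ => []
  | n+1, x => dig β ((Tb β)^[n] x) :: word β n x

/-- The length of the image interval of a symbolic cylinder. -/
noncomputable def L (β : ℝ) : List Bool → ℝ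
  | [] => 1
  | d :: w => if d then β * L β w - 1 else min (β * L β w) 1

/-- The collection of admissible words of length `n`. -/
noncomputable def A (β : ℝ) : ℕ → Finset (List Bool)
  | 0 => {[]}
  | n+1 => (A β n).biUnion (fun w => if β⁻¹ < L β w then {false :: w, true :: w} else {false :: w})

lemma word_length (n : ℕ) (x : ℝ) : (word β n x).length = n := by
  induction n with
  | zero => rfl
  | succ n ih => simp [word, ih]

lemma L_mem_A (hβ2 : β < 2) : ∀ n, ∀ w ∈ A β n, 0 ≤ L β w ∧ L β w ≤ 1 := by
  intro n
  induction n with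
  | zero => intro w hw; simp only [A, Finset.mem_singleton] at hw; subst hw; simp [L]
  | succ n ih =>
    intro w hw
    simp only [A, Finset.mem_biUnion] at hw
    obtain ⟨v, hv, hw⟩ := hw
    obtain ⟨h0, h1⟩ := ih v hv
    by_cases hc : β⁻¹ < L β v
    · rw [if_pos hc] at hw
      simp only [Finset.mem_insert, Finset.mem_singleton] at hw
      have hβv : 1 ≤ β * L β v := by
        rw [← mul_inv_cancel₀ (βpos hβ).ne']
        exact mul_le_mul_of_nonneg_left hc.le (βpos hβ).le
      rcases hw with rfl | rfl
      · simp only [L, if_neg Bool.false_ne_true]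
        constructor
        · exact le_min (by positivity) zero_le_one
        · exact min_le_right _ _
      · have hL : L β (true :: v) = β * L β v - 1 := by simp [L]
        rw [hL]
        constructor
        · linarith
        · nlinarith
    · rw [if_neg hc] at hw
      simp only [Finset.mem_singleton] at hw
      subst hw
      push_neg at hc
      simp only [L, if_neg Bool.false_ne_true]
      constructor
      · exact le_min (by positivity) zero_le_one
      · exact min_le_right _ _

lemma word_mem_A (hβ2 : β < 2) {x : ℝ} (hx : x ∈ Icc (0:ℝ) 1) :
    ∀ n, word β n x ∈ A β n ∧ (Tb β)^[n] x ≤ L β (word β n x) := by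
  intro n
  induction n with
  | zero => exact ⟨by simp [A, word], by simpa [L, word] using hx.2⟩
  | succ n ih =>
    obtain ⟨hmem, hle⟩ := ih
    have hTn := Tb_iter_mem hβ hβ2 hx n
    have hpos : 0 ≤ (Tb β)^[n] x := hTn.1
    constructor
    · show (dig β ((Tb β)^[n] x) :: word β n x) ∈ A β (n+1)
      simp only [A, Finset.mem_biUnion]
      refine ⟨word β n x, hmem, ?_⟩
      cases hd : dig β ((Tb β)^[n] x)
      · split_ifs <;> simp
      · have : β⁻¹ < (Tb β)^[n] x := by simpa [dig] using hd
        rw [if_pos (lt_of_lt_of_le this hle)]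
        simp
    · show (Tb β)^[n+1] x ≤ L β (dig β ((Tb β)^[n] x) :: word β n x)
      rw [Function.iterate_succ_apply']
      cases hd : dig β ((Tb β)^[n] x)
      · rw [Tb_of_dig_false hβ hd]
        simp only [L, if_neg Bool.false_ne_true]
        refine le_min (mul_le_mul_of_nonneg_left hle (βpos hβ).le) ?_
        rw [← Tb_of_dig_false hβ hd]
        exact (Tb_mem hβ hβ2 hTn).2
      · rw [Tb_of_dig_true hβ hd]
        have hL : L β (true :: word β n x) = β * L β (word β n x) - 1 := by simp [L]
        rw [hL]
        have := mul_le_mul_of_nonneg_left hle (βpos hβ).le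
        linarith


lemma A_children_disjoint (n : ℕ) : ∀ w ∈ A β n, ∀ v ∈ A β n, w ≠ v →
    Disjoint (if β⁻¹ < L β w then ({false :: w, true :: w} : Finset (List Bool)) else {false :: w})
      (if β⁻¹ < L β v then ({false :: v, true :: v} : Finset (List Bool)) else {false :: v}) := by
  intro w _ v _ hwv
  rw [Finset.disjoint_left]
  intro a ha hb
  have hw : a.tail = w := by
    split_ifs at ha <;> simp only [Finset.mem_insert, Finset.mem_singleton] at ha <;>
      first
        | (rcases ha with rfl | rfl <;> rfl)
        | (rcases ha with rfl; rfl)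
  have hv : a.tail = v := by
    split_ifs at hb <;> simp only [Finset.mem_insert, Finset.mem_singleton] at hb <;>
      first
        | (rcases hb with rfl | rfl <;> rfl)
        | (rcases hb with rfl; rfl)
  exact hwv (hw ▸ hv)

lemma A_sum (hβ2 : β < 2) : ∀ n, ∑ w ∈ A β n, L β w = β ^ n := by
  intro n
  induction n with
  | zero => simp [A, L]
  | succ n ih =>
    have hdisj := A_children_disjoint hβ (β := β) n
    rw [show A β (n+1) = (A β n).biUnion
        (fun w => if β⁻¹ < L β w then {false :: w, true :: w} else {false :: w}) from rfl,
      Finset.sum_biUnion hdisj]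
    have : ∀ w ∈ A β n,
        (∑ a ∈ (if β⁻¹ < L β w then ({false :: w, true :: w} : Finset (List Bool))
          else {false :: w}), L β a) = β * L β w := by
      intro w hw
      obtain ⟨h0, h1⟩ := L_mem_A hβ hβ2 n w hw
      split_ifs with hc
      · rw [Finset.sum_pair (by simp)]
        have hβv : 1 ≤ β * L β w := by
          rw [← mul_inv_cancel₀ (βpos hβ).ne']
          exact mul_le_mul_of_nonneg_left hc.le (βpos hβ).le
        have e1 : L β (false :: w) = min (β * L β w) 1 := by
          simp [L]
        have e2 : L β (true :: w) = β * L β w - 1 := by simp [L]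
        rw [e1, e2, min_eq_right hβv]
        ring
      · push_neg at hc
        have hβv : β * L β w ≤ 1 := by
          calc β * L β w ≤ β * β⁻¹ := mul_le_mul_of_nonneg_left hc (βpos hβ).le
            _ = 1 := mul_inv_cancel₀ (βpos hβ).ne'
        rw [Finset.sum_singleton]
        have e1 : L β (false :: w) = min (β * L β w) 1 := by simp [L]
        rw [e1, min_eq_left hβv]
    rw [Finset.sum_congr rfl this, ← Finset.mul_sum, ih]
    ring

lemma A_card_succ (hβ2 : β < 2) (n : ℕ) :
    ((A β (n+1)).card : ℝ) ≤ (A β n).card + β ^ (n+1) := by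
  have hdisj := A_children_disjoint hβ (β := β) n
  rw [show A β (n+1) = (A β n).biUnion
      (fun w => if β⁻¹ < L β w then {false :: w, true :: w} else {false :: w}) from rfl,
    Finset.card_biUnion hdisj]
  have hcard : ∀ w ∈ A β n,
      ((if β⁻¹ < L β w then ({false :: w, true :: w} : Finset (List Bool))
        else {false :: w}).card : ℝ) = 1 + (if β⁻¹ < L β w then (1:ℝ) else 0) := by
    intro w _
    split_ifs with hc
    · rw [Finset.card_pair (by simp)]; norm_num
    · simp
  push_cast
  rw [Finset.sum_congr rfl hcard, Finset.sum_add_distrib]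
  simp only [Finset.sum_const, nsmul_eq_mul, mul_one]
  have hfil : (∑ w ∈ A β n, if β⁻¹ < L β w then (1:ℝ) else 0) ≤ β ^ (n+1) := by
    have h1 : (∑ w ∈ A β n, if β⁻¹ < L β w then (1:ℝ) else 0)
        ≤ ∑ w ∈ A β n, β * L β w := by
      apply Finset.sum_le_sum
      intro w hw
      obtain ⟨h0, _⟩ := L_mem_A hβ hβ2 n w hw
      split_ifs with hc
      · rw [← mul_inv_cancel₀ (βpos hβ).ne']
        exact mul_le_mul_of_nonneg_left hc.le (βpos hβ).le
      · positivity
    calc (∑ w ∈ A β n, if β⁻¹ < L β w then (1:ℝ) else 0) ≤ ∑ w ∈ A β n, β * L β w := h1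
      _ = β * β ^ n := by rw [← Finset.mul_sum, A_sum hβ hβ2]
      _ = β ^ (n+1) := by ring
  linarith

lemma A_card_le (hβ2 : β < 2) (n : ℕ) :
    ((A β n).card : ℝ) ≤ (1 + β / (β - 1)) * β ^ n := by
  induction n with
  | zero =>
    have : ((A β 0).card : ℝ) = 1 := by simp [A]
    rw [this]
    have h1 : (0:ℝ) < β - 1 := by linarith
    have h2 : (0:ℝ) ≤ β / (β - 1) := by positivity
    simp only [pow_zero, mul_one]
    linarith
  | succ n ih =>
    have h := A_card_succ hβ hβ2 n
    have h1 : (0:ℝ) < β - 1 := by linarith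
    have hb : (0:ℝ) < β ^ n := by positivity
    have key : (1 + β / (β - 1)) * β ^ n + β ^ (n+1) ≤ (1 + β / (β - 1)) * β ^ (n+1) := by
      rw [pow_succ]
      have e : β / (β - 1) * (β - 1) = β := div_mul_cancel₀ _ h1.ne'
      nlinarith [mul_le_mul_of_nonneg_left e.le hb.le]
    calc ((A β (n+1)).card : ℝ) ≤ (A β n).card + β ^ (n+1) := h
      _ ≤ (1 + β / (β - 1)) * β ^ n + β ^ (n+1) := by linarith
      _ ≤ (1 + β / (β - 1)) * β ^ (n+1) := key
lemma word_eq_dig {x y : ℝ} : ∀ n, word β n x = word β n y →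
    ∀ j < n, dig β ((Tb β)^[j] x) = dig β ((Tb β)^[j] y) := by
  intro n
  induction n with
  | zero => intro _ j hj; omega
  | succ n ih =>
    intro h j hj
    have h' : dig β ((Tb β)^[n] x) = dig β ((Tb β)^[n] y) ∧ word β n x = word β n y := by
      simpa [word] using h
    rcases Nat.lt_succ_iff_lt_or_eq.1 hj with hj' | rfl
    · exact ih h'.2 j hj'
    · exact h'.1

lemma Tb_iter_sub {x y : ℝ} {n : ℕ}
    (hdig : ∀ j < n, dig β ((Tb β)^[j] x) = dig β ((Tb β)^[j] y)) :
    ∀ k ≤ n, (Tb β)^[k] x - (Tb β)^[k] y = β ^ k * (x - y) := by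
  intro k hk
  induction k with
  | zero => simp
  | succ k ihk =>
    have hk' : k ≤ n := Nat.le_of_succ_le hk
    rw [Function.iterate_succ_apply', Function.iterate_succ_apply',
      Tb_sub_of_dig_eq hβ (hdig k (Nat.lt_of_succ_le hk)), ihk hk']
    ring

lemma cylinder_diam (hβ2 : β < 2) {x y : ℝ} (hx : x ∈ Icc (0:ℝ) 1) (hy : y ∈ Icc (0:ℝ) 1)
    {n : ℕ} (hw : word β n x = word β n y) : |x - y| ≤ (β ^ n)⁻¹ := by
  have h := Tb_iter_sub hβ (word_eq_dig hβ n hw) n le_rfl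
  have hβn : (0:ℝ) < β ^ n := by positivity
  rw [show (β ^ n)⁻¹ = 1 / β ^ n from (one_div _).symm, le_div_iff₀ hβn, mul_comm]
  have h1 := Tb_iter_mem hβ hβ2 hx n
  have h2 := Tb_iter_mem hβ hβ2 hy n
  calc β ^ n * |x - y| = |β ^ n * (x - y)| := by
        rw [abs_mul, abs_of_pos hβn]
    _ = |(Tb β)^[n] x - (Tb β)^[n] y| := by rw [h]
    _ ≤ 1 := by
        rw [abs_le]
        constructor <;> [linarith [h1.1, h2.2]; linarith [h1.2, h2.1]]

lemma skew_step_sub (τ : ℝ) {p q : ℝ × ℝ} (hd : dig β p.1 = dig β q.1) :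
    (skewMap β τ p).1 - (skewMap β τ q).1 = β * (p.1 - q.1) ∧
    (skewMap β τ p).2 - (skewMap β τ q).2 = τ * (p.2 - q.2) := by
  unfold skewMap
  cases hdp : dig β p.1
  · have h1 : p.1 ≤ β⁻¹ := not_lt.1 (by simpa [dig] using hdp)
    have h2 : q.1 ≤ β⁻¹ := not_lt.1 (by simpa [dig] using (hd ▸ hdp : dig β q.1 = false))
    rw [if_pos h1, if_pos h2]
    constructor <;> [simp; simp] <;> ring
  · have h1 : ¬ p.1 ≤ β⁻¹ := not_le.2 (by simpa [dig] using hdp)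
    have h2 : ¬ q.1 ≤ β⁻¹ := not_le.2 (by simpa [dig] using (hd ▸ hdp : dig β q.1 = true))
    rw [if_neg h1, if_neg h2]
    constructor <;> simp <;> ring

lemma skew_iter_sub (τ : ℝ) {x y a b : ℝ} {n : ℕ}
    (hdig : ∀ j < n, dig β ((Tb β)^[j] x) = dig β ((Tb β)^[j] y)) :
    ∀ k ≤ n, ((skewMap β τ)^[k] (x, a)).1 - ((skewMap β τ)^[k] (y, b)).1 = β ^ k * (x - y) ∧
      ((skewMap β τ)^[k] (x, a)).2 - ((skewMap β τ)^[k] (y, b)).2 = τ ^ k * (a - b) := by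
  intro k hk
  induction k with
  | zero => simp
  | succ k ihk =>
    have hk' : k ≤ n := Nat.le_of_succ_le hk
    obtain ⟨ih1, ih2⟩ := ihk hk'
    have hd : dig β (((skewMap β τ)^[k] (x, a)).1) = dig β (((skewMap β τ)^[k] (y, b)).1) := by
      rw [skew_iter_fst, skew_iter_fst]
      exact hdig k (Nat.lt_of_succ_le hk)
    obtain ⟨s1, s2⟩ := skew_step_sub hβ τ hd
    constructor
    · rw [Function.iterate_succ_apply', Function.iterate_succ_apply', s1, ih1]; ring
    · rw [Function.iterate_succ_apply', Function.iterate_succ_apply', s2, ih2]; ring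

omit hβ in
lemma abs_sub_le_of_mem_Icc {a b lo hi : ℝ} (ha : a ∈ Icc lo hi) (hb : b ∈ Icc lo hi) :
    |a - b| ≤ hi - lo := by
  rw [abs_sub_le_iff]
  constructor <;> [linarith [ha.2, hb.1]; linarith [ha.1, hb.2]]

lemma exists_dynCover {τ : ℝ} (hβ2 : β < 2) (hτ0 : 0 < τ) (hτ1 : τ < 1) {ε : ℝ} (hε : 0 < ε)
    (m : ℕ) :
    ∃ s : Finset (ℝ × ℝ), IsDynCoverOf (skewMap β τ) (Icc (0:ℝ) 1 ×ˢ Icc (0:ℝ) 1)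
      {p : (ℝ × ℝ) × ℝ × ℝ | dist p.1 p.2 < ε} (m+1) s ∧
      (s.card : ℝ) ≤ ((A β m).card : ℝ) * ((⌈4/ε⌉₊ + 1) * (⌈2/ε⌉₊ + 1)) := by
  have hβ0 := βpos hβ
  have hβm : (0:ℝ) < β ^ m := by positivity
  set δ : ℝ := ε / 2 * (β ^ m)⁻¹ with hδ_def
  have hδ : 0 < δ := by positivity
  set cyl : List Bool → Set ℝ := fun w => {x : ℝ | x ∈ Icc (0:ℝ) 1 ∧ word β m x = w} with hcyl_def
  classical
  set ctr : List Bool → ℕ → ℝ := fun w j =>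
    if h : (cyl w ∩ Icc ((if h2 : (cyl w).Nonempty then h2.some else 0) - (β ^ m)⁻¹ + j * δ)
      ((if h2 : (cyl w).Nonempty then h2.some else 0) - (β ^ m)⁻¹ + (j+1) * δ)).Nonempty
    then h.some else 0 with hctr_def
  set M : ℕ := ⌈4/ε⌉₊ + 1 with hM_def
  set M' : ℕ := ⌈2/ε⌉₊ + 1 with hM'_def
  refine ⟨Finset.image (fun t : (List Bool × ℕ) × ℕ => (ctr t.1.1 t.1.2, t.2 * (ε/2)))
    (((A β m) ×ˢ Finset.range M) ×ˢ Finset.range M'), ?_, ?_⟩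
  · -- cover property
    rintro ⟨x, y⟩ ⟨hx, hy⟩
    simp only [mem_Icc] at hx hy
    have hx' : x ∈ Icc (0:ℝ) 1 := hx
    set w : List Bool := word β m x with hw_def
    have hwA : w ∈ A β m := (word_mem_A hβ hβ2 hx' m).1
    have hxcyl : x ∈ cyl w := ⟨hx', rfl⟩
    have hne : (cyl w).Nonempty := ⟨x, hxcyl⟩
    have hxw_eq : (if h2 : (cyl w).Nonempty then h2.some else 0) = hne.some := dif_pos hne
    set x₀ : ℝ := hne.some with hx₀_def
    have hx₀ : x₀ ∈ cyl w := hne.some_mem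
    have hdist : |x - x₀| ≤ (β ^ m)⁻¹ :=
      cylinder_diam hβ hβ2 hx' hx₀.1 (hx₀.2.symm ▸ rfl)
    set t : ℝ := x - (x₀ - (β ^ m)⁻¹) with ht_def
    have ht0 : 0 ≤ t := by
      have := abs_le.1 hdist
      simp only [ht_def]; linarith [this.2]
    have ht2 : t ≤ 2 * (β ^ m)⁻¹ := by
      have := abs_le.1 hdist
      simp only [ht_def]; linarith [this.1]
    set j : ℕ := ⌊t / δ⌋₊ with hj_def
    have hjM : j < M := by
      have h1 : (j : ℝ) ≤ t / δ := Nat.floor_le (div_nonneg ht0 hδ.le)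
      have h2 : t / δ ≤ 4 / ε := by
        rw [div_le_div_iff₀ hδ hε]
        calc t * ε ≤ 2 * (β ^ m)⁻¹ * ε := by nlinarith
          _ = 4 * δ := by rw [hδ_def]; ring
      have h3 : (j : ℝ) ≤ (⌈4/ε⌉₊ : ℝ) := (h1.trans h2).trans (Nat.le_ceil _)
      have := Nat.cast_le (α := ℝ) |>.1 h3
      omega
    have hxI : x ∈ Icc (x₀ - (β ^ m)⁻¹ + j * δ) (x₀ - (β ^ m)⁻¹ + (j+1) * δ) := by
      constructor
      · have : (j : ℝ) * δ ≤ t := by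
          rw [← le_div_iff₀ hδ]
          exact Nat.floor_le (div_nonneg ht0 hδ.le)
        simp only [ht_def] at this; linarith
      · have : t < ((j : ℝ) + 1) * δ := by
          rw [← div_lt_iff₀ hδ]
          exact Nat.lt_floor_add_one _
        simp only [ht_def] at this; linarith
    have hne2 : (cyl w ∩ Icc ((if h2 : (cyl w).Nonempty then h2.some else 0) - (β ^ m)⁻¹ + j * δ)
        ((if h2 : (cyl w).Nonempty then h2.some else 0) - (β ^ m)⁻¹ + (j+1) * δ)).Nonempty := by
      rw [hxw_eq]
      exact ⟨x, hxcyl, hxI⟩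
    have hc_eq : ctr w j = hne2.some := dif_pos hne2
    have hc_mem := hne2.some_mem
    rw [← hc_eq, hxw_eq] at hc_mem
    obtain ⟨hc_cyl, hc_I⟩ := hc_mem
    have hcx : |ctr w j - x| ≤ δ := by
      have := abs_sub_le_of_mem_Icc hc_I hxI
      calc |ctr w j - x| ≤ (x₀ - (β ^ m)⁻¹ + (j+1) * δ) - (x₀ - (β ^ m)⁻¹ + j * δ) := this
        _ = δ := by ring
    set i : ℕ := ⌊y / (ε/2)⌋₊ with hi_def
    have hiM : i < M' := by
      have h1 : (i : ℝ) ≤ y / (ε/2) := Nat.floor_le (div_nonneg hy.1 (by positivity))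
      have h2 : y / (ε/2) ≤ 2 / ε := by
        rw [div_le_div_iff₀ (by positivity) hε]
        nlinarith [hy.2]
      have h3 : (i : ℝ) ≤ (⌈2/ε⌉₊ : ℝ) := (h1.trans h2).trans (Nat.le_ceil _)
      have := Nat.cast_le (α := ℝ) |>.1 h3
      omega
    have hby : |(i : ℝ) * (ε/2) - y| ≤ ε/2 := by
      have h1 : (i : ℝ) * (ε/2) ≤ y := by
        rw [← le_div_iff₀ (by positivity : (0:ℝ) < ε/2)]
        exact Nat.floor_le (div_nonneg hy.1 (by positivity))
      have h2 : y < ((i : ℝ) + 1) * (ε/2) := by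
        rw [← div_lt_iff₀ (by positivity : (0:ℝ) < ε/2)]
        exact Nat.lt_floor_add_one _
      rw [abs_sub_le_iff]
      constructor <;> nlinarith
    -- now show membership in the union of balls
    simp only [Finset.coe_image, mem_iUnion, mem_image, Finset.mem_coe, Finset.mem_product,
      Finset.mem_range]
    refine ⟨(ctr w j, (i : ℝ) * (ε/2)), ⟨((w, j), i), ⟨⟨hwA, hjM⟩, hiM⟩, rfl⟩, ?_⟩
    -- ball membership
    simp only [UniformSpace.ball, mem_preimage, mem_dynEntourage]
    intro k hk
    have hk' : k ≤ m := Nat.lt_succ_iff.1 hk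
    have hdig : ∀ j' < m, dig β ((Tb β)^[j'] (ctr w j)) = dig β ((Tb β)^[j'] x) :=
      word_eq_dig hβ m (by rw [hc_cyl.2, hw_def])
    obtain ⟨h1, h2⟩ := skew_iter_sub hβ τ hdig k hk'
    simp only [mem_setOf_eq, Prod.dist_eq, Real.dist_eq]
    have hd1 : |((skewMap β τ)^[k] (ctr w j, (i:ℝ)*(ε/2))).1 - ((skewMap β τ)^[k] (x, y)).1|
        ≤ ε / 2 := by
      rw [h1, abs_mul, abs_of_pos (by positivity : (0:ℝ) < β ^ k)]
      calc β ^ k * |ctr w j - x| ≤ β ^ m * δ := by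
            apply mul_le_mul (pow_le_pow_right₀ hβ.le hk') hcx (abs_nonneg _) (le_of_lt hβm)
        _ = ε / 2 := by rw [hδ_def]; field_simp
    have hd2 : |((skewMap β τ)^[k] (ctr w j, (i:ℝ)*(ε/2))).2 - ((skewMap β τ)^[k] (x, y)).2|
        ≤ ε / 2 := by
      rw [h2, abs_mul, abs_of_pos (by positivity : (0:ℝ) < τ ^ k)]
      calc τ ^ k * |(i:ℝ)*(ε/2) - y| ≤ 1 * (ε/2) := by
            apply mul_le_mul (pow_le_one₀ hτ0.le hτ1.le) hby (abs_nonneg _) zero_le_one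
        _ = ε / 2 := one_mul _
    calc max _ _ ≤ ε / 2 := max_le (by rwa [abs_sub_comm]) (by rwa [abs_sub_comm])
      _ < ε := by linarith
  · -- cardinality
    calc ((Finset.image _ _).card : ℝ) ≤ ((((A β m) ×ˢ Finset.range M) ×ˢ Finset.range M').card : ℝ) := by
          exact_mod_cast Finset.card_image_le
      _ = ((A β m).card : ℝ) * ((⌈4/ε⌉₊ + 1) * (⌈2/ε⌉₊ + 1)) := by
          simp only [Finset.card_product, Finset.card_range, hM_def, hM'_def]
          push_cast
          ring

lemma iter_seg (τ : ℝ) : ∀ i : ℕ, ∀ x ∈ Icc (0:ℝ) 1, (skewMap β τ)^[i] (x / β ^ i, 0) = (x, 0) := by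
  intro i
  induction i with
  | zero => intro x _; simp
  | succ i ih =>
    intro x hx
    have hβ0 := βpos hβ
    have h1 : x / β ^ (i+1) ≤ β⁻¹ := by
      rw [div_le_iff₀ (by positivity : (0:ℝ) < β ^ (i+1))]
      have h2 : (1:ℝ) ≤ β ^ i := one_le_pow₀ hβ.le
      have h3 : β⁻¹ * β ^ (i+1) = β ^ i := by
        rw [pow_succ]
        field_simp
      rw [h3]
      exact hx.2.trans h2
    have hstep : skewMap β τ (x / β ^ (i+1), 0) = (x / β ^ i, 0) := by
      unfold skewMap
      rw [if_pos h1]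
      have : β * (x / β ^ (i+1)) = x / β ^ i := by
        field_simp
        ring
      rw [this]
      simp
    rw [Function.iterate_succ_apply, hstep, ih x hx]

lemma segment_subset_attractor (τ : ℝ) {x : ℝ} (hx : x ∈ Icc (0:ℝ) 1) :
    (x, (0:ℝ)) ∈ attractor β τ := by
  apply subset_closure
  rw [mem_iInter]
  intro i
  refine ⟨(x / β ^ i, 0), ⟨⟨?_, ?_⟩, le_rfl, zero_le_one⟩, iter_seg hβ τ i x hx⟩
  · have hβ0 := βpos hβ
    exact div_nonneg hx.1 (by positivity)
  · have hβ0 := βpos hβ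
    rw [div_le_one (by positivity)]
    exact hx.2.trans (one_le_pow₀ hβ.le)

lemma dig_split {x y ε : ℝ} (hdx : dig β x = false) (hdy : dig β y = true)
    (hε2 : ε * (1 + β) ≤ 1) (hxy : |x - y| < ε) : ε ≤ |Tb β x - Tb β y| := by
  have hβ0 := βpos hβ
  have hx' : x ≤ β⁻¹ := not_lt.1 (by simpa [dig] using hdx)
  have hy' : β⁻¹ < y := by simpa [dig] using hdy
  have hyx : 0 < y - x := by linarith
  have hyx2 : y - x < ε := by
    have := abs_lt.1 hxy
    linarith [this.1]
  have hTx : Tb β x = β * x := Tb_of_dig_false hβ hdx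
  have hTy : Tb β y = β * y - 1 := Tb_of_dig_true hβ hdy
  have key : Tb β x - Tb β y = 1 - β * (y - x) := by rw [hTx, hTy]; ring
  have h1 : ε ≤ 1 - β * (y - x) := by nlinarith
  calc ε ≤ 1 - β * (y - x) := h1
    _ = Tb β x - Tb β y := key.symm
    _ ≤ |Tb β x - Tb β y| := le_abs_self _

lemma expansion (hβ2 : β < 2) {ε : ℝ} (hε2 : ε * (1 + β) ≤ 1) :
    ∀ n : ℕ, ∀ x ∈ Icc (0:ℝ) 1, ∀ y ∈ Icc (0:ℝ) 1,
    (∀ k ≤ n, |(Tb β)^[k] x - (Tb β)^[k] y| < ε) → |x - y| < ε / β ^ n := by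
  intro n
  induction n with
  | zero => intro x _ y _ h; simpa using h 0 le_rfl
  | succ n ih =>
    intro x hx y hy h
    have hβ0 := βpos hβ
    by_cases hd : dig β x = dig β y
    · have hsub : Tb β x - Tb β y = β * (x - y) := Tb_sub_of_dig_eq hβ hd
      have ih' := ih (Tb β x) (Tb_mem hβ hβ2 hx) (Tb β y) (Tb_mem hβ hβ2 hy)
        (fun k hk => by
          rw [← Function.iterate_succ_apply, ← Function.iterate_succ_apply]
          exact h (k+1) (by omega))
      have h2 : β * |x - y| < ε / β ^ n := by
        rw [hsub, abs_mul, abs_of_pos hβ0] at ih'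
        exact ih'
      rw [lt_div_iff₀ (by positivity)] at h2 ⊢
      calc |x - y| * β ^ (n+1) = β * |x - y| * β ^ n := by ring
        _ < ε := h2
    · exfalso
      have h0 : |x - y| < ε := h 0 (by omega)
      have h1 : |Tb β x - Tb β y| < ε := by
        have := h 1 (by omega)
        simpa using this
      cases hdx : dig β x
      · have hdy : dig β y = true := by
          cases hdy : dig β y
          · exact absurd (hdx.trans hdy.symm) hd
          · rfl
        exact absurd h1 (not_lt.2 (dig_split hβ hdx hdy hε2 h0))
      · have hdy : dig β y = false := by
          cases hdy : dig β y
          · rfl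
          · exact absurd (hdx.trans hdy.symm) hd
        have := dig_split hβ hdy hdx hε2 (by rwa [abs_sub_comm])
        rw [abs_sub_comm] at this
        exact absurd h1 (not_lt.2 this)

lemma exists_dynNet (τ : ℝ) (hβ2 : β < 2) {ε : ℝ} (hε : 0 < ε) (hε2 : ε * (1 + β) ≤ 1) (n : ℕ) :
    ∃ s : Finset (ℝ × ℝ), IsDynNetIn (skewMap β τ) (attractor β τ)
      {p : (ℝ × ℝ) × ℝ × ℝ | dist p.1 p.2 < ε/2} (n+1) s ∧
      s.card = ⌊β ^ n / ε⌋₊ := by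
  have hβ0 := βpos hβ
  have hβn : (0:ℝ) < β ^ n := by positivity
  set c : ℝ := ε / β ^ n with hc_def
  have hc : 0 < c := by positivity
  set N : ℕ := ⌊β ^ n / ε⌋₊ with hN_def
  have hmem : ∀ i < N, ((i:ℝ) * c) ∈ Icc (0:ℝ) 1 := by
    intro i hi
    constructor
    · positivity
    · have h1 : (i:ℝ) + 1 ≤ N := by exact_mod_cast hi
      have h2 : (N:ℝ) ≤ β ^ n / ε := Nat.floor_le (by positivity)
      have h3 : (i:ℝ) ≤ β ^ n / ε - 1 := by linarith
      calc (i:ℝ) * c ≤ (β ^ n / ε - 1) * c := by nlinarith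
        _ = 1 - c := by rw [hc_def]; field_simp
        _ ≤ 1 := by linarith
  refine ⟨Finset.image (fun i : ℕ => (((i:ℝ) * c, (0:ℝ)) : ℝ × ℝ)) (Finset.range N), ⟨?_, ?_⟩, ?_⟩
  · -- subset of attractor
    intro p hp
    simp only [Finset.coe_image, mem_image, Finset.mem_coe, Finset.mem_range] at hp
    obtain ⟨i, hi, rfl⟩ := hp
    exact segment_subset_attractor hβ τ (hmem i hi)
  · -- pairwise disjoint
    intro p hp q hq hpq
    simp only [Finset.coe_image, mem_image, Finset.mem_coe, Finset.mem_range] at hp hq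
    obtain ⟨i, hi, rfl⟩ := hp
    obtain ⟨j, hj, rfl⟩ := hq
    have hij : i ≠ j := fun h => hpq (by rw [h])
    rw [Function.onFun, Set.disjoint_left]
    intro z hz1 hz2
    rw [UniformSpace.ball, mem_preimage, mem_dynEntourage] at hz1 hz2
    have hclose : ∀ k ≤ n, |(Tb β)^[k] ((i:ℝ)*c) - (Tb β)^[k] ((j:ℝ)*c)| < ε := by
      intro k hk
      have h1 := hz1 k (by omega)
      have h2 := hz2 k (by omega)
      simp only [mem_setOf_eq] at h1 h2
      have d1 : |((skewMap β τ)^[k] ((i:ℝ)*c, (0:ℝ))).1 - ((skewMap β τ)^[k] z).1| < ε/2 := by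
        have hle : dist ((skewMap β τ)^[k] ((i:ℝ)*c, (0:ℝ))).1 (((skewMap β τ)^[k] z)).1
            ≤ dist ((skewMap β τ)^[k] ((i:ℝ)*c, (0:ℝ))) ((skewMap β τ)^[k] z) := by
          rw [Prod.dist_eq]; exact le_max_left _ _
        rw [Real.dist_eq] at hle
        linarith
      have d2 : |((skewMap β τ)^[k] ((j:ℝ)*c, (0:ℝ))).1 - ((skewMap β τ)^[k] z).1| < ε/2 := by
        have hle : dist ((skewMap β τ)^[k] ((j:ℝ)*c, (0:ℝ))).1 (((skewMap β τ)^[k] z)).1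
            ≤ dist ((skewMap β τ)^[k] ((j:ℝ)*c, (0:ℝ))) ((skewMap β τ)^[k] z) := by
          rw [Prod.dist_eq]; exact le_max_left _ _
        rw [Real.dist_eq] at hle
        linarith
      rw [skew_iter_fst] at d1 d2
      simp only [] at d1 d2
      have habs : |(Tb β)^[k] ((i:ℝ)*c) - (Tb β)^[k] ((j:ℝ)*c)| ≤
          |(Tb β)^[k] ((i:ℝ)*c) - ((skewMap β τ)^[k] z).1| +
          |(Tb β)^[k] ((j:ℝ)*c) - ((skewMap β τ)^[k] z).1| := by
        have h3 := abs_sub_le ((Tb β)^[k] ((i:ℝ)*c)) (((skewMap β τ)^[k] z).1)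
          ((Tb β)^[k] ((j:ℝ)*c))
        rw [abs_sub_comm (((skewMap β τ)^[k] z).1) ((Tb β)^[k] ((j:ℝ)*c))] at h3
        exact h3
      linarith
    have hfar := expansion hβ hβ2 hε2 n _ (hmem i hi) _ (hmem j hj) hclose
    have hij1 : (1:ℝ) ≤ |(i:ℝ) - (j:ℝ)| := by
      have hne : ((i:ℤ) - (j:ℤ)) ≠ 0 := by
        simp only [sub_ne_zero]
        exact_mod_cast hij
      have hone : (1:ℤ) ≤ |(i:ℤ) - (j:ℤ)| := Int.one_le_abs hne
      calc (1:ℝ) ≤ ((|(i:ℤ) - (j:ℤ)| : ℤ) : ℝ) := by exact_mod_cast hone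
        _ = |(i:ℝ) - (j:ℝ)| := by push_cast; ring
    have : |(i:ℝ)*c - (j:ℝ)*c| = |(i:ℝ) - (j:ℝ)| * c := by
      rw [← sub_mul, abs_mul, abs_of_pos hc]
    rw [this] at hfar
    have : ε / β ^ n = c := rfl
    rw [this] at hfar
    nlinarith
  · -- cardinality
    rw [Finset.card_image_of_injective _ ?_, Finset.card_range]
    intro a b hab
    have h1 : (a:ℝ) * c = (b:ℝ) * c := congrArg Prod.fst hab
    have h2 : (a:ℝ) = b := mul_right_cancel₀ hc.ne' h1
    exact_mod_cast h2

omit hβ in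
lemma tendsto_ereal_aux (a b : ℝ) :
    Filter.Tendsto (fun n : ℕ => (((a + n * b)/n : ℝ) : EReal)) Filter.atTop (nhds (b : EReal)) := by
  rw [EReal.tendsto_coe]
  have h1 : ∀ᶠ n : ℕ in Filter.atTop, a / n + b = (a + n * b)/n := by
    filter_upwards [Filter.eventually_gt_atTop 0] with n hn
    have : (n:ℝ) ≠ 0 := Nat.cast_ne_zero.2 hn.ne'
    field_simp
  apply Filter.Tendsto.congr' h1
  have h2 := tendsto_const_div_atTop_nhds_zero_nat a
  simpa using h2.add_const b

omit hβ in
lemma limsup_le_of_seq {u : ℕ → EReal} {a b : ℝ}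
    (h : ∀ᶠ n : ℕ in Filter.atTop, u n ≤ (((a + n * b)/n : ℝ) : EReal)) :
    Filter.limsup u Filter.atTop ≤ (b : EReal) :=
  (Filter.limsup_le_limsup h).trans_eq ((tendsto_ereal_aux a b).limsup_eq)

omit hβ in
lemma le_limsup_of_seq {u : ℕ → EReal} {a b : ℝ}
    (h : ∀ᶠ n : ℕ in Filter.atTop, (((a + n * b)/n : ℝ) : EReal) ≤ u n) :
    (b : EReal) ≤ Filter.limsup u Filter.atTop :=
  ((tendsto_ereal_aux a b).limsup_eq).symm.trans_le (Filter.limsup_le_limsup h)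

omit hβ in
lemma coverMincard_mono_set {X : Type*} {T : X → X} {F G : Set X} (h : F ⊆ G) (U : Set (X × X))
    (n : ℕ) : coverMincard T F U n ≤ coverMincard T G U n :=
  le_iInf₂ fun s hs => iInf₂_le s (h.trans hs)

lemma attractor_subset (τ : ℝ) : attractor β τ ⊆ Icc (0:ℝ) 1 ×ˢ Icc (0:ℝ) 1 := by
  apply closure_minimal _ (isClosed_Icc.prod isClosed_Icc)
  intro p hp
  have := mem_iInter.1 hp 0
  simpa using this

omit hβ in
lemma ediv_nat (r : ℝ) (n : ℕ) : (r : EReal) / (n : EReal) = ((r / n : ℝ) : EReal) := by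
  rw [← EReal.coe_coe_eq_natCast, ← EReal.coe_div]

lemma coverEntropyEntourage_le_log (τ : ℝ) (hβ2 : β < 2) (hτ0 : 0 < τ) (hτ1 : τ < 1)
    {ε : ℝ} (hε : 0 < ε) :
    coverEntropyEntourage (skewMap β τ) (attractor β τ)
      {p : (ℝ × ℝ) × ℝ × ℝ | dist p.1 p.2 < ε} ≤ ((Real.log β : ℝ) : EReal) := by
  have hβ0 := βpos hβ
  set K : ℝ := ((⌈4/ε⌉₊ : ℝ) + 1) * ((⌈2/ε⌉₊ : ℝ) + 1) with hK_def
  have hK1 : 1 ≤ K := by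
    have h1 : (1:ℝ) ≤ (⌈4/ε⌉₊ : ℝ) + 1 := by
      have := Nat.cast_nonneg (α := ℝ) ⌈4/ε⌉₊
      linarith
    have h2 : (1:ℝ) ≤ (⌈2/ε⌉₊ : ℝ) + 1 := by
      have := Nat.cast_nonneg (α := ℝ) ⌈2/ε⌉₊
      linarith
    nlinarith
  set C : ℝ := (1 + β / (β - 1)) * K with hC_def
  have hC1 : 1 ≤ C := by
    have h1 : (0:ℝ) < β - 1 := by linarith
    have h2 : (0:ℝ) ≤ β / (β - 1) := by positivity
    nlinarith
  apply limsup_le_of_seq (a := Real.log C)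
  filter_upwards [Filter.eventually_ge_atTop 1] with n hn
  obtain ⟨m, rfl⟩ : ∃ m, n = m + 1 := ⟨n - 1, by omega⟩
  obtain ⟨s, hs_cover, hs_card⟩ := exists_dynCover hβ hβ2 hτ0 hτ1 hε m
  have hmin : coverMincard (skewMap β τ) (attractor β τ)
      {p : (ℝ × ℝ) × ℝ × ℝ | dist p.1 p.2 < ε} (m+1) ≤ (s.card : ℕ∞) :=
    (coverMincard_mono_set (attractor_subset hβ τ) _ _).trans
      (IsDynCoverOf.coverMincard_le_card hs_cover)
  have hcard : (s.card : ℝ) ≤ C * β ^ (m+1) := by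
    calc (s.card : ℝ) ≤ ((A β m).card : ℝ) * K := hs_card
      _ ≤ ((1 + β / (β - 1)) * β ^ m) * K := by
          have := A_card_le hβ hβ2 m
          nlinarith [pow_pos hβ0 m]
      _ = C * β ^ m := by rw [hC_def]; ring
      _ ≤ C * β ^ (m+1) := by
          have h1 : (0:ℝ) < β ^ m := by positivity
          have : β ^ m ≤ β ^ (m+1) := pow_le_pow_right₀ hβ.le (by omega)
          nlinarith
  have hpos : (0:ℝ) < C * β ^ (m+1) := by positivity
  have hlog : ENNReal.log (coverMincard (skewMap β τ) (attractor β τ)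
      {p : (ℝ × ℝ) × ℝ × ℝ | dist p.1 p.2 < ε} (m+1) : ℝ≥0∞)
      ≤ ((Real.log (C * β ^ (m+1)) : ℝ) : EReal) := by
    rw [← ENNReal.log_ofReal_of_pos hpos]
    apply ENNReal.log_monotone
    calc (coverMincard (skewMap β τ) (attractor β τ) _ (m+1) : ℝ≥0∞)
        ≤ ((s.card : ℕ∞) : ℝ≥0∞) := ENat.toENNReal_mono hmin
      _ = ((s.card : ℕ) : ℝ≥0∞) := by simp
      _ = ENNReal.ofReal (s.card : ℝ) := by rw [ENNReal.ofReal_natCast]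
      _ ≤ ENNReal.ofReal (C * β ^ (m+1)) := ENNReal.ofReal_le_ofReal hcard
  have hlogval : Real.log (C * β ^ (m+1)) = Real.log C + (m+1) * Real.log β := by
    rw [Real.log_mul (by positivity) (by positivity), Real.log_pow]
    push_cast
    ring
  calc ENNReal.log (coverMincard (skewMap β τ) (attractor β τ)
        {p : (ℝ × ℝ) × ℝ × ℝ | dist p.1 p.2 < ε} (m+1) : ℝ≥0∞) / ((m+1 : ℕ) : EReal)
      ≤ ((Real.log (C * β ^ (m+1)) : ℝ) : EReal) / ((m+1 : ℕ) : EReal) := by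
        apply EReal.div_le_div_right_of_nonneg (by exact_mod_cast Nat.cast_nonneg' (m+1)) hlog
    _ = (((Real.log C + (m+1) * Real.log β) / (m+1 : ℕ) : ℝ) : EReal) := by
        rw [ediv_nat, hlogval]
    _ = (((Real.log C + ((m+1:ℕ):ℝ) * Real.log β) / ((m+1:ℕ):ℝ) : ℝ) : EReal) := by
        push_cast
        rfl

lemma log_le_netEntropyEntourage (τ : ℝ) (hβ2 : β < 2) :
    ((Real.log β : ℝ) : EReal) ≤ netEntropyEntourage (skewMap β τ) (attractor β τ)
      {p : (ℝ × ℝ) × ℝ × ℝ | dist p.1 p.2 < (1 + β)⁻¹ / 2} := by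
  have hβ0 := βpos hβ
  set ε : ℝ := (1 + β)⁻¹ with hε_def
  have hε : 0 < ε := by rw [hε_def]; positivity
  have hε2 : ε * (1 + β) = 1 := inv_mul_cancel₀ (by positivity)
  set a : ℝ := Real.log ((1 + β) / 2) - Real.log β with ha_def
  apply le_limsup_of_seq (a := a)
  filter_upwards [Filter.eventually_ge_atTop 1] with n hn
  obtain ⟨m, rfl⟩ : ∃ m, n = m + 1 := ⟨n - 1, by omega⟩
  obtain ⟨s, hs_net, hs_card⟩ := exists_dynNet hβ τ hβ2 hε hε2.le m
  have hmax : (⌊β ^ m / ε⌋₊ : ℕ∞) ≤ netMaxcard (skewMap β τ) (attractor β τ)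
      {p : (ℝ × ℝ) × ℝ × ℝ | dist p.1 p.2 < ε / 2} (m+1) := by
    rw [← hs_card]
    exact hs_net.card_le_netMaxcard
  have hz : β ^ m / ε = β ^ m * (1 + β) := by
    rw [hε_def, div_inv_eq_mul]
  have hzpos : (0:ℝ) < β ^ m * (1 + β) / 2 := by positivity
  have hfloor : β ^ m * (1 + β) / 2 ≤ (⌊β ^ m / ε⌋₊ : ℝ) := by
    have h1 : β ^ m / ε - 1 < (⌊β ^ m / ε⌋₊ : ℝ) := by
      apply sub_lt_iff_lt_add.2
      have := Nat.lt_floor_add_one (β ^ m / ε)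
      linarith
    have h2 : (2:ℝ) ≤ β ^ m * (1 + β) := by
      have := one_le_pow₀ (n := m) hβ.le
      nlinarith
    rw [hz] at h1 ⊢
    linarith
  have hlog : ((a + (m+1 : ℕ) * Real.log β : ℝ) : EReal)
      ≤ ENNReal.log (netMaxcard (skewMap β τ) (attractor β τ)
        {p : (ℝ × ℝ) × ℝ × ℝ | dist p.1 p.2 < ε / 2} (m+1) : ℝ≥0∞) := by
    have hstep : ENNReal.ofReal (β ^ m * (1 + β) / 2)
        ≤ (netMaxcard (skewMap β τ) (attractor β τ)
          {p : (ℝ × ℝ) × ℝ × ℝ | dist p.1 p.2 < ε / 2} (m+1) : ℝ≥0∞) := by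
      calc ENNReal.ofReal (β ^ m * (1 + β) / 2) ≤ ENNReal.ofReal (⌊β ^ m / ε⌋₊ : ℝ) :=
            ENNReal.ofReal_le_ofReal hfloor
        _ = ((⌊β ^ m / ε⌋₊ : ℕ) : ℝ≥0∞) := ENNReal.ofReal_natCast _
        _ ≤ _ := by
            rw [← ENat.toENNReal_coe (⌊β ^ m / ε⌋₊)]
            exact ENat.toENNReal_mono hmax
    calc ((a + (m+1 : ℕ) * Real.log β : ℝ) : EReal)
        = ((Real.log (β ^ m * (1 + β) / 2) : ℝ) : EReal) := by
          congr 1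
          rw [Real.log_div (by positivity) (by norm_num), Real.log_mul (by positivity)
            (by positivity), Real.log_pow, ha_def, Real.log_div (by positivity) (by norm_num)]
          push_cast
          ring
      _ = ENNReal.log (ENNReal.ofReal (β ^ m * (1 + β) / 2)) :=
          (ENNReal.log_ofReal_of_pos hzpos).symm
      _ ≤ _ := ENNReal.log_monotone hstep
  calc (((a + ((m+1:ℕ):ℝ) * Real.log β) / ((m+1:ℕ):ℝ) : ℝ) : EReal)
      = ((a + (m+1 : ℕ) * Real.log β : ℝ) : EReal) / (((m+1:ℕ)) : EReal) := by
        rw [ediv_nat]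
    _ ≤ _ := EReal.div_le_div_right_of_nonneg (by exact_mod_cast Nat.cast_nonneg' (m+1)) hlog

end Beta
end SkewProof

/-- The topological entropy of `(Λ_{β,τ}, f)` equals `log β`. -/
theorem stmt14 (β τ : ℝ) (hβ : 1 < β) (hβ2 : β < 2) (hτ0 : 0 < τ) (hτ : τ < 1 / 2) :
    coverEntropy (skewMap β τ) (attractor β τ) = Real.log β := by
  apply le_antisymm
  · rw [coverEntropy]
    apply iSup₂_le
    intro U hU
    obtain ⟨ε, hε, hsub⟩ := Metric.mem_uniformity_dist.1 hU
    have hsub' : {p : (ℝ × ℝ) × ℝ × ℝ | dist p.1 p.2 < ε} ⊆ U := fun p hp => hsub hp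
    exact (coverEntropyEntourage_antitone (skewMap β τ) (attractor β τ) hsub').trans
      (SkewProof.coverEntropyEntourage_le_log hβ τ hβ2 hτ0 (by linarith) hε)
  · have hpos : (0:ℝ) < (1 + β)⁻¹ / 2 := by positivity
    have hU : {p : (ℝ × ℝ) × ℝ × ℝ | dist p.1 p.2 < (1 + β)⁻¹ / 2} ∈ uniformity (ℝ × ℝ) :=
      Metric.dist_mem_uniformity hpos
    exact (SkewProof.log_le_netEntropyEntourage hβ τ hβ2).trans
      (netEntropyEntourage_le_coverEntropy (skewMap β τ) (attractor β τ) hU)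
end
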